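/- arXiv:1801.05177 — 10 statements merged into one kernel-verified Lean document; each statement's English description precedes it below -/
import Mathlib

section
/- Let D be a strongly connected balanced bipartite digraph of order 2a ≥ 6 with partite sets X and Y. If d(x) + d(y) ≥ 3a for every pair of distinct vertices x, y either both in X or both in Y, then D contains a cycle of length 2 (i.e., a pair of vertices joined by arcs in both directions). -/
open Finset

section Defs

variable {V : Type*}

/-- `D` contains a directed cycle of length `k` (`k ≥ 2`): an injective map from
`ZMod k` such that consecutive vertices are joined by arcs. -/
def HasCycle (A : V → V → Prop) (k : ℕ) : Prop :=
  2 ≤ k ∧ ∃ f : ZMod k → V, Function.Injective f ∧ ∀ i, A (f i) (f (i + 1))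

/-- A digraph is strongly connected if every vertex is reachable from every other. -/
def StrongConn (A : V → V → Prop) : Prop := ∀ u v : V, Relation.ReflTransGen A u v

def outDeg [Fintype V] (A : V → V → Prop) [DecidableRel A] (u : V) : ℕ :=
  (Finset.univ.filter fun v => A u v).card

def inDeg [Fintype V] (A : V → V → Prop) [DecidableRel A] (u : V) : ℕ :=
  (Finset.univ.filter fun v => A v u).card

/-- total degree -/
def deg [Fintype V] (A : V → V → Prop) [DecidableRel A] (u : V) : ℕ :=
  outDeg A u + inDeg A u

/-- `D` is bipartite with partite sets `X`, `Y`: they partition the vertex set and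
every arc goes between the two sets. -/
def BipartiteWith [Fintype V] [DecidableEq V] (A : V → V → Prop) (X Y : Finset V) : Prop :=
  Disjoint X Y ∧ X ∪ Y = Finset.univ ∧
    ∀ u v, A u v → (u ∈ X ∧ v ∈ Y) ∨ (u ∈ Y ∧ v ∈ X)

/-- Bipartite digraph with explicitly indexed partite sets
`X = {x 0, …, x (a-1)}`, `Y = {y 0, …, y (a-1)}`. -/
def IndexedBipartite {a : ℕ} (A : V → V → Prop) (x y : Fin a → V) : Prop :=
  Function.Injective x ∧ Function.Injective y ∧ (∀ i j, x i ≠ y j) ∧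
  (∀ v : V, (∃ i, v = x i) ∨ (∃ i, v = y i)) ∧
  ∀ u v, A u v → (∃ i j, u = x i ∧ v = y j) ∨ (∃ i j, u = y i ∧ v = x j)

/-- The contracted digraph `D*[M]` of the matching `y i → x i`:
arc `v_l → v_j` (`l ≠ j`) iff `x l → y j` in `D`. -/
def Dstar {a : ℕ} (A : V → V → Prop) (x y : Fin a → V) : Fin a → Fin a → Prop :=
  fun l j => l ≠ j ∧ A (x l) (y j)

instance {a : ℕ} (A : V → V → Prop) [DecidableRel A] (x y : Fin a → V) :
    DecidableRel (Dstar A x y) := fun l j => by unfold Dstar; infer_instance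

/-- The size of a perfect matching `y i → x (π i)` from `Y` to `X`:
the number of matched pairs with no arc back from `X` to `Y`. -/
def matchSize {a : ℕ} (A : V → V → Prop) [DecidableRel A] (x y : Fin a → V)
    (π : Equiv.Perm (Fin a)) : ℕ :=
  (Finset.univ.filter fun i => ¬ A (x (π i)) (y i)).card

/-- `y i → x i` is a perfect matching from `Y` to `X` of maximum size among all
perfect matchings from `Y` to `X`. -/
def IsMaxMatching {a : ℕ} (A : V → V → Prop) [DecidableRel A] (x y : Fin a → V) : Prop :=
  (∀ i, A (y i) (x i)) ∧
  ∀ π : Equiv.Perm (Fin a), (∀ i, A (y i) (x (π i))) →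
    matchSize A x y π ≤ matchSize A x y 1

/-- `D` is a directed cycle: its arcs are exactly those of a cyclic ordering of all vertices. -/
def IsDirectedCycle [Fintype V] (A : V → V → Prop) : Prop :=
  ∃ e : V ≃ ZMod (Fintype.card V), ∀ u v, A u v ↔ e v = e u + 1

end Defs


/-- existence of a cycle of length 2. -/
theorem stmt1 {V : Type*} [Fintype V] [DecidableEq V] (A : V → V → Prop) [DecidableRel A]
    (a : ℕ) (ha : 3 ≤ a) (X Y : Finset V)
    (hcard : Fintype.card V = 2 * a) (hX : X.card = a) (hY : Y.card = a)
    (hbip : BipartiteWith A X Y) (hstrong : StrongConn A)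
    (hdeg : ∀ u v : V, u ≠ v → ((u ∈ X ∧ v ∈ X) ∨ (u ∈ Y ∧ v ∈ Y)) →
      3 * a ≤ deg A u + deg A v) :
    ∃ u v : V, u ≠ v ∧ A u v ∧ A v u := by
  by_contra hcon
  push_neg at hcon
  obtain ⟨hdisj, hunion, harc⟩ := hbip
  have noloop : ∀ u, ¬ A u u := by
    intro u hu
    rcases harc u u hu with ⟨h1, h2⟩ | ⟨h1, h2⟩
    · exact Finset.disjoint_left.mp hdisj h1 h2
    · exact Finset.disjoint_left.mp hdisj h2 h1
  have no2 : ∀ u v, ¬ (A u v ∧ A v u) := by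
    rintro u v ⟨h1, h2⟩
    by_cases huv : u = v
    · exact noloop u (huv ▸ h1)
    · exact hcon u v huv h1 h2
  have hdegX : ∀ u ∈ X, deg A u ≤ a := by
    intro u hu
    have hsub1 : (univ.filter fun v => A u v) ⊆ Y := by
      intro v hv
      simp only [mem_filter] at hv
      rcases harc u v hv.2 with ⟨_, h⟩ | ⟨h, _⟩
      · exact h
      · exact absurd hu (Finset.disjoint_right.mp hdisj h)
    have hsub2 : (univ.filter fun v => A v u) ⊆ Y := by
      intro v hv
      simp only [mem_filter] at hv
      rcases harc v u hv.2 with ⟨_, h⟩ | ⟨h, _⟩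
      · exact absurd h (Finset.disjoint_left.mp hdisj hu)
      · exact h
    have hd : Disjoint (univ.filter fun v => A u v) (univ.filter fun v => A v u) := by
      rw [Finset.disjoint_left]
      intro v hv1 hv2
      simp only [mem_filter] at hv1 hv2
      exact no2 u v ⟨hv1.2, hv2.2⟩
    have := Finset.card_union_of_disjoint hd
    calc deg A u = ((univ.filter fun v => A u v) ∪ (univ.filter fun v => A v u)).card := by
          rw [Finset.card_union_of_disjoint hd]; rfl
      _ ≤ Y.card := Finset.card_le_card (Finset.union_subset hsub1 hsub2)
      _ = a := hY
  have h2card : 1 < X.card := by omega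
  obtain ⟨u, hu, v, hv, huv⟩ := Finset.one_lt_card.mp h2card
  have := hdeg u v huv (Or.inl ⟨hu, hv⟩)
  have h1 := hdegX u hu
  have h2 := hdegX v hv
  omega
end

section
/- Let D be a strongly connected balanced bipartite digraph of order 2a ≥ 6 with partite sets X and Y. If d(x) + d(y) ≥ 3a for every pair of distinct vertices x, y either both in X or both in Y, then D contains a directed cycle of length 4. -/
open Finset

lemma zmod4cases : ∀ i : ZMod 4, i = 0 ∨ i = 1 ∨ i = 2 ∨ i = 3 := by decide

lemma cycle4 {V : Type*} (A : V → V → Prop) (x1 y1 x2 y2 : V)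
    (hx : x1 ≠ x2) (hy : y1 ≠ y2)
    (h11 : x1 ≠ y1) (h12 : x1 ≠ y2) (h21 : x2 ≠ y1) (h22 : x2 ≠ y2)
    (a1 : A x1 y1) (a2 : A y1 x2) (a3 : A x2 y2) (a4 : A y2 x1) :
    HasCycle A 4 := by
  refine ⟨by norm_num,
    fun i => if i = 0 then x1 else if i = 1 then y1 else if i = 2 then x2 else y2, ?_, ?_⟩
  · intro i j h
    rcases zmod4cases i with hi | hi | hi | hi <;> rcases zmod4cases j with hj | hj | hj | hj <;>
      subst hi <;> subst hj <;>
      first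
        | rfl
        | (exact absurd h hx) | (exact absurd h hx.symm)
        | (exact absurd h hy) | (exact absurd h hy.symm)
        | (exact absurd h h11) | (exact absurd h h11.symm)
        | (exact absurd h h12) | (exact absurd h h12.symm)
        | (exact absurd h h21) | (exact absurd h h21.symm)
        | (exact absurd h h22) | (exact absurd h h22.symm)
  · intro i
    rcases zmod4cases i with hi | hi | hi | hi <;> subst hi <;>
      first | exact a1 | exact a2 | exact a3 | exact a4

/-- existence of a directed cycle of length 4. -/
theorem stmt2 {V : Type*} [Fintype V] [DecidableEq V] (A : V → V → Prop) [DecidableRel A]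
    (a : ℕ) (ha : 3 ≤ a) (X Y : Finset V)
    (hcard : Fintype.card V = 2 * a) (hX : X.card = a) (hY : Y.card = a)
    (hbip : BipartiteWith A X Y) (hstrong : StrongConn A)
    (hdeg : ∀ u v : V, u ≠ v → ((u ∈ X ∧ v ∈ X) ∨ (u ∈ Y ∧ v ∈ Y)) →
      3 * a ≤ deg A u + deg A v) :
    HasCycle A 4 := by
  classical
  by_contra hno
  obtain ⟨hdisj, hunion, harc⟩ := hbip
  have hXY : ∀ p ∈ X, ∀ q ∈ Y, p ≠ q := by
    intro p hp q hq h; subst h; exact Finset.disjoint_left.mp hdisj hp hq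
  -- out-neighbors of a vertex in X lie in Y
  have hout : ∀ u ∈ X, (Y.filter fun z => A u z).card = outDeg A u := by
    intro u hu
    unfold outDeg
    congr 1
    apply Finset.ext
    intro z
    simp only [Finset.mem_filter, Finset.mem_univ, true_and]
    refine ⟨fun h => h.2, fun h => ⟨?_, h⟩⟩
    rcases harc u z h with ⟨_, hz⟩ | ⟨hu', _⟩
    · exact hz
    · exact (Finset.disjoint_left.mp hdisj hu hu').elim
  have hin : ∀ u ∈ X, (Y.filter fun z => A z u).card = inDeg A u := by
    intro u hu
    unfold inDeg
    congr 1
    apply Finset.ext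
    intro z
    simp only [Finset.mem_filter, Finset.mem_univ, true_and]
    refine ⟨fun h => h.2, fun h => ⟨?_, h⟩⟩
    rcases harc z u h with ⟨hz', hu'⟩ | ⟨hz', _⟩
    · exact (Finset.disjoint_left.mp hdisj hu hu').elim
    · exact hz'
  -- the key dichotomy
  have key : ∀ u ∈ X, ∀ v ∈ X, u ≠ v →
      (∀ z ∈ Y, A u z ∧ A z v) ∨ (∀ z ∈ Y, A v z ∧ A z u) := by
    intro u hu v hv huv
    have genbound : ∀ p q : V, p ∈ X → q ∈ X →
        outDeg A p + inDeg A q ≤ a + (Y.filter fun z => A p z ∧ A z q).card := by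
      intro p q hp hq
      rw [← hout p hp, ← hin q hq]
      have e1 := Finset.card_union_add_card_inter (Y.filter fun z => A p z)
        (Y.filter fun z => A z q)
      have e2 : (Y.filter fun z => A p z) ∩ (Y.filter fun z => A z q)
          = Y.filter (fun z => A p z ∧ A z q) := by
        ext z
        simp only [Finset.mem_inter, Finset.mem_filter]
        tauto
      rw [e2] at e1
      have e3 : ((Y.filter fun z => A p z) ∪ (Y.filter fun z => A z q)).card ≤ Y.card :=
        Finset.card_le_card
          (Finset.union_subset (Finset.filter_subset _ _) (Finset.filter_subset _ _))
      omega
    set S := Y.filter (fun z => A u z ∧ A z v) with hSdef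
    set S' := Y.filter (fun z => A v z ∧ A z u) with hS'def
    have hb1 : outDeg A u + inDeg A v ≤ a + S.card := genbound u v hu hv
    have hb2 : outDeg A v + inDeg A u ≤ a + S'.card := genbound v u hv hu
    have hd := hdeg u v huv (Or.inl ⟨hu, hv⟩)
    unfold deg at hd
    have hsum : a ≤ S.card + S'.card := by omega
    -- if both S and S' nonempty, we get a 4-cycle or a contradiction
    have hcases : S = ∅ ∨ S' = ∅ := by
      by_contra hc
      push_neg at hc
      obtain ⟨z0, hz0⟩ := hc.1
      obtain ⟨z0', hz0'⟩ := hc.2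
      have heq : ∀ z ∈ S, ∀ z' ∈ S', z = z' := by
        intro z hz z' hz'
        by_contra hzz
        rw [hSdef, Finset.mem_filter] at hz
        rw [hS'def, Finset.mem_filter] at hz'
        exact hno (cycle4 A u z v z' huv hzz
          (hXY u hu z hz.1) (hXY u hu z' hz'.1) (hXY v hv z hz.1) (hXY v hv z' hz'.1)
          hz.2.1 hz.2.2 hz'.2.1 hz'.2.2)
      have hc1 : S.card ≤ 1 := Finset.card_le_one.mpr
        (fun p hp q hq => (heq p hp z0' hz0').trans (heq q hq z0' hz0').symm)
      have hc2 : S'.card ≤ 1 := Finset.card_le_one.mpr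
        (fun p hp q hq => ((heq z0 hz0 p hp).symm.trans (heq z0 hz0 q hq)))
      omega
    rcases hcases with h0 | h0
    · right
      have : S' = Y := Finset.eq_of_subset_of_card_le (Finset.filter_subset _ _)
        (by rw [hY]; simp [h0] at hsum ⊢; omega)
      intro z hz
      have : z ∈ S' := this ▸ hz
      rw [hS'def, Finset.mem_filter] at this
      exact this.2
    · left
      have : S = Y := Finset.eq_of_subset_of_card_le (Finset.filter_subset _ _)
        (by rw [hY]; simp [h0] at hsum ⊢; omega)
      intro z hz
      have : z ∈ S := this ▸ hz
      rw [hSdef, Finset.mem_filter] at this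
      exact this.2
  -- pick three distinct vertices of X
  obtain ⟨x1, hx1⟩ : X.Nonempty := by rw [← Finset.card_pos, hX]; omega
  have h2 : 1 < (X.erase x1).card := by rw [Finset.card_erase_of_mem hx1, hX]; omega
  obtain ⟨x2, hx2, x3, hx3, h23⟩ := Finset.one_lt_card.mp h2
  have h12 : x1 ≠ x2 := (Finset.ne_of_mem_erase hx2).symm
  have h13 : x1 ≠ x3 := (Finset.ne_of_mem_erase hx3).symm
  have hx2X := Finset.mem_of_mem_erase hx2
  have hx3X := Finset.mem_of_mem_erase hx3
  -- find a chain u ⇒ v ⇒ w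
  obtain ⟨u, hu, v, hv, w, hw, hvw, hRuv, hRvw⟩ :
      ∃ u ∈ X, ∃ v ∈ X, ∃ w ∈ X, v ≠ w ∧
        (∀ z ∈ Y, A u z ∧ A z v) ∧ (∀ z ∈ Y, A v z ∧ A z w) := by
    rcases key x1 hx1 x2 hx2X h12 with r12 | r21
    · rcases key x2 hx2X x3 hx3X h23 with r23 | r32
      · exact ⟨x1, hx1, x2, hx2X, x3, hx3X, h23, r12, r23⟩
      · rcases key x1 hx1 x3 hx3X h13 with r13 | r31
        · exact ⟨x1, hx1, x3, hx3X, x2, hx2X, h23.symm, r13, r32⟩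
        · exact ⟨x3, hx3X, x1, hx1, x2, hx2X, h12, r31, r12⟩
    · rcases key x2 hx2X x3 hx3X h23 with r23 | r32
      · rcases key x1 hx1 x3 hx3X h13 with r13 | r31
        · exact ⟨x2, hx2X, x1, hx1, x3, hx3X, h13, r21, r13⟩
        · exact ⟨x2, hx2X, x3, hx3X, x1, hx1, h13.symm, r23, r31⟩
      · exact ⟨x3, hx3X, x2, hx2X, x1, hx1, h12.symm, r32, r21⟩
  -- w has an out-neighbor z ∈ Y (by strong connectivity)
  rcases (hstrong w v).cases_head with heq | ⟨z, hwz, _⟩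
  · exact hvw heq.symm
  have hzY : z ∈ Y := by
    rcases harc w z hwz with ⟨_, h⟩ | ⟨hw', _⟩
    · exact h
    · exact (Finset.disjoint_left.mp hdisj hw hw').elim
  obtain ⟨y1, hy1, hy1z⟩ := Finset.exists_mem_ne (by rw [hY]; omega) z
  -- the cycle v → y1 → w → z → v
  exact hno (cycle4 A v y1 w z hvw hy1z
    (hXY v hv y1 hy1) (hXY v hv z hzY) (hXY w hw y1 hy1) (hXY w hw z hzY)
    (hRvw y1 hy1).1 (hRvw y1 hy1).2 hwz (hRuv z hzY).2)
end

section
/- Let D be a balanced bipartite digraph with partite sets X and Y, M = {y_i x_i : i=1,...,a} a perfect matching from Y to X of maximum size, and D*[M] the contracted digraph. Suppose v_i and v_j are non-adjacent in D*[M] (i.e., x_i y_j ∉ A(D) and x_j y_i ∉ A(D)). If x_i y_i ∈ A(D) or x_j y_j ∈ A(D), then at most one of the arcs y_i x_j and y_j x_i belongs to A(D). -/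
open Finset

/-- Claim 1(i): for non-adjacent v_i, v_j in D*[M] with
x_i y_i ∈ A(D) or x_j y_j ∈ A(D), at most one of y_i x_j, y_j x_i is an arc. -/
theorem stmt8 {V : Type*} (A : V → V → Prop) [DecidableRel A] (a : ℕ)
    (x y : Fin a → V) (hbip : IndexedBipartite A x y) (hmax : IsMaxMatching A x y)
    (i j : Fin a) (hij : i ≠ j)
    (h1 : ¬ A (x i) (y j)) (h2 : ¬ A (x j) (y i))
    (h3 : A (x i) (y i) ∨ A (x j) (y j)) :
    ¬ (A (y i) (x j) ∧ A (y j) (x i)) := by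
  rintro ⟨ha, hb⟩
  obtain ⟨hmatch, hopt⟩ := hmax
  set π := Equiv.swap i j with hπ
  have hπi : π i = j := Equiv.swap_apply_left i j
  have hπj : π j = i := Equiv.swap_apply_right i j
  have hm : ∀ k, A (y k) (x (π k)) := by
    intro k
    rcases eq_or_ne k i with rfl | hki
    · rw [hπi]; exact ha
    rcases eq_or_ne k j with rfl | hkj
    · rw [hπj]; exact hb
    · rw [hπ, Equiv.swap_apply_of_ne_of_ne hki hkj]; exact hmatch k
  have hle : (Finset.univ.filter fun k => ¬ A (x (π k)) (y k)).card ≤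
      (Finset.univ.filter fun k => ¬ A (x k) (y k)).card := by
    exact hopt π hm
  set S1 := Finset.univ.filter fun k => ¬ A (x (π k)) (y k) with hS1
  set S0 := Finset.univ.filter fun k => ¬ A (x k) (y k) with hS0
  set T : Finset (Fin a) := {i, j} with hT
  have e0 := Finset.card_inter_add_card_sdiff S0 T
  have e1 := Finset.card_inter_add_card_sdiff S1 T
  have hsd : S0 \ T = S1 \ T := by
    ext k
    simp only [Finset.mem_sdiff, hS0, hS1, hT, Finset.mem_filter, Finset.mem_univ,
      Finset.mem_insert, Finset.mem_singleton, true_and]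
    constructor
    · rintro ⟨hk, hk2⟩
      push_neg at hk2
      rw [hπ, Equiv.swap_apply_of_ne_of_ne hk2.1 hk2.2]
      exact ⟨hk, not_or.mpr hk2⟩
    · rintro ⟨hk, hk2⟩
      push_neg at hk2
      rw [hπ, Equiv.swap_apply_of_ne_of_ne hk2.1 hk2.2] at hk
      exact ⟨hk, not_or.mpr hk2⟩
  have hi1 : i ∈ S1 := by
    simp only [hS1, Finset.mem_filter, Finset.mem_univ, true_and, hπi]
    exact h2
  have hj1 : j ∈ S1 := by
    simp only [hS1, Finset.mem_filter, Finset.mem_univ, true_and, hπj]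
    exact h1
  have hT1 : S1 ∩ T = T := by
    apply Finset.inter_eq_right.mpr
    intro k hk
    rcases Finset.mem_insert.mp hk with rfl | hk
    · exact hi1
    · rw [Finset.mem_singleton.mp hk]; exact hj1
  have hTcard : T.card = 2 := by
    rw [hT, Finset.card_insert_of_notMem (by simpa using hij), Finset.card_singleton]
  have h0small : (S0 ∩ T).card ≤ 1 := by
    rcases h3 with hxi | hxj
    · have : S0 ∩ T ⊆ {j} := by
        intro k hk
        obtain ⟨hk0, hkT⟩ := Finset.mem_inter.mp hk
        rcases Finset.mem_insert.mp hkT with rfl | hk2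
        · exfalso
          simp only [hS0, Finset.mem_filter] at hk0
          exact hk0.2 hxi
        · exact hk2
      simpa using Finset.card_le_card this
    · have : S0 ∩ T ⊆ {i} := by
        intro k hk
        obtain ⟨hk0, hkT⟩ := Finset.mem_inter.mp hk
        rcases Finset.mem_insert.mp hkT with rfl | hk2
        · exact Finset.mem_singleton_self _
        · exfalso
          rw [Finset.mem_singleton.mp hk2] at hk0
          simp only [hS0, Finset.mem_filter] at hk0
          exact hk0.2 hxj
      simpa using Finset.card_le_card this
  rw [hT1, hTcard] at e1
  have hsc := congrArg Finset.card hsd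
  omega
end

section
/- Let D be a strongly connected balanced bipartite digraph of order 2a ≥ 6 satisfying d(x)+d(y) ≥ 3a for every pair of distinct vertices from the same partite set, and let M = {y_i x_i} be a perfect matching from Y to X of maximum size with contracted digraph D*[M]. If v_i and v_j are non-adjacent vertices of D*[M] and x_i y_i ∉ A(D) or x_j y_j ∉ A(D), then d(v_i) + d(v_j) ≥ 2a − 1 in D*[M]. -/
open Finset

/-- Claim 1(ii): non-adjacent v_i, v_j in D*[M] with x_i y_i ∉ A(D)
or x_j y_j ∉ A(D) have degree sum at least 2a − 1 in D*[M]. -/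
theorem stmt9 {V : Type*} [Fintype V] (A : V → V → Prop) [DecidableRel A]
    (a : ℕ) (ha : 3 ≤ a) (x y : Fin a → V) (hbip : IndexedBipartite A x y)
    (hstrong : StrongConn A)
    (hdegx : ∀ i j : Fin a, i ≠ j → 3 * a ≤ deg A (x i) + deg A (x j))
    (hdegy : ∀ i j : Fin a, i ≠ j → 3 * a ≤ deg A (y i) + deg A (y j))
    (hmax : IsMaxMatching A x y)
    (i j : Fin a) (hij : i ≠ j)
    (h1 : ¬ A (x i) (y j)) (h2 : ¬ A (x j) (y i))
    (h3 : ¬ A (x i) (y i) ∨ ¬ A (x j) (y j)) :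
    2 * a - 1 ≤ deg (Dstar A x y) i + deg (Dstar A x y) j := by
  classical
  obtain ⟨hxinj, hyinj, hxy, hcov, harc⟩ := hbip
  obtain ⟨hM, hMmax⟩ := hmax
  -- out-degree of x k in D equals the number of l with x k → y l
  have hout : ∀ k, outDeg A (x k) = (univ.filter fun l => A (x k) (y l)).card := by
    intro k
    unfold outDeg
    have himg : univ.filter (fun v => A (x k) v)
        = (univ.filter fun l => A (x k) (y l)).image y := by
      ext v
      simp only [mem_filter, mem_univ, true_and, mem_image]
      constructor
      · intro hA
        rcases harc _ _ hA with ⟨i', j', hu, hv⟩ | ⟨i', j', hu, hv⟩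
        · subst hv; exact ⟨j', hA, rfl⟩
        · exact absurd hu (hxy k i')
      · rintro ⟨l, hl, rfl⟩
        exact hl
    rw [himg, card_image_of_injective _ hyinj]
  -- in-degree of y k in D equals the number of l with x l → y k
  have hin : ∀ k, inDeg A (y k) = (univ.filter fun l => A (x l) (y k)).card := by
    intro k
    unfold inDeg
    have himg : univ.filter (fun v => A v (y k))
        = (univ.filter fun l => A (x l) (y k)).image x := by
      ext v
      simp only [mem_filter, mem_univ, true_and, mem_image]
      constructor
      · intro hA
        rcases harc _ _ hA with ⟨i', j', hu, hv⟩ | ⟨i', j', hu, hv⟩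
        · subst hu; exact ⟨i', hA, rfl⟩
        · exact absurd hv.symm (hxy j' k)
      · rintro ⟨l, hl, rfl⟩
        exact hl
    rw [himg, card_image_of_injective _ hxinj]
  have himgy : (univ.image y).card = a := by
    rw [card_image_of_injective _ hyinj, card_univ, Fintype.card_fin]
  have himgx : (univ.image x).card = a := by
    rw [card_image_of_injective _ hxinj, card_univ, Fintype.card_fin]
  -- in-degree of x k is at most a
  have hinx_le : ∀ k, inDeg A (x k) ≤ a := by
    intro k
    unfold inDeg
    have hsub : univ.filter (fun v => A v (x k)) ⊆ univ.image y := by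
      intro u hu
      simp only [mem_filter, mem_univ, true_and] at hu
      rcases harc _ _ hu with ⟨i', j', h1', h2'⟩ | ⟨i', j', h1', h2'⟩
      · exact absurd h2' (hxy k j')
      · exact mem_image.2 ⟨i', mem_univ _, h1'.symm⟩
    calc (univ.filter fun v => A v (x k)).card ≤ (univ.image y).card := card_le_card hsub
      _ = a := himgy
  -- out-degree of y k is at most a
  have houty_le : ∀ k, outDeg A (y k) ≤ a := by
    intro k
    unfold outDeg
    have hsub : univ.filter (fun v => A (y k) v) ⊆ univ.image x := by
      intro u hu
      simp only [mem_filter, mem_univ, true_and] at hu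
      rcases harc _ _ hu with ⟨i', j', h1', h2'⟩ | ⟨i', j', h1', h2'⟩
      · exact absurd h1'.symm (hxy i' k)
      · exact mem_image.2 ⟨j', mem_univ _, h2'.symm⟩
    calc (univ.filter fun v => A (y k) v).card ≤ (univ.image x).card := card_le_card hsub
      _ = a := himgx
  -- strengthened bounds when some matching-direction arc is missing
  have hinx_lt : ∀ k l, ¬ A (y l) (x k) → inDeg A (x k) + 1 ≤ a := by
    intro k l hno
    unfold inDeg
    have hsub : univ.filter (fun v => A v (x k)) ⊆ (univ.image y).erase (y l) := by
      intro u hu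
      simp only [mem_filter, mem_univ, true_and] at hu
      rcases harc _ _ hu with ⟨i', j', h1', h2'⟩ | ⟨i', j', h1', h2'⟩
      · exact absurd h2' (hxy k j')
      · refine mem_erase.2 ⟨?_, mem_image.2 ⟨i', mem_univ _, h1'.symm⟩⟩
        intro he
        exact hno (he ▸ hu)
    have hcard : ((univ.image y).erase (y l)).card + 1 = (univ.image y).card :=
      card_erase_add_one (mem_image.2 ⟨l, mem_univ _, rfl⟩)
    have h := card_le_card hsub
    omega
  have houty_lt : ∀ k l, ¬ A (y k) (x l) → outDeg A (y k) + 1 ≤ a := by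
    intro k l hno
    unfold outDeg
    have hsub : univ.filter (fun v => A (y k) v) ⊆ (univ.image x).erase (x l) := by
      intro u hu
      simp only [mem_filter, mem_univ, true_and] at hu
      rcases harc _ _ hu with ⟨i', j', h1', h2'⟩ | ⟨i', j', h1', h2'⟩
      · exact absurd h1'.symm (hxy i' k)
      · refine mem_erase.2 ⟨?_, mem_image.2 ⟨j', mem_univ _, h2'.symm⟩⟩
        intro he
        exact hno (he ▸ hu)
    have hcard : ((univ.image x).erase (x l)).card + 1 = (univ.image x).card :=
      card_erase_add_one (mem_image.2 ⟨l, mem_univ _, rfl⟩)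
    have h := card_le_card hsub
    omega
  -- degrees in Dstar via erase
  have hDout : ∀ k, outDeg (Dstar A x y) k
      = ((univ.filter fun l => A (x k) (y l)).erase k).card := by
    intro k
    unfold outDeg
    congr 1
    ext l
    simp only [mem_filter, mem_univ, true_and, mem_erase]
    simp only [Dstar]
    try tauto
  have hDin : ∀ k, inDeg (Dstar A x y) k
      = ((univ.filter fun l => A (x l) (y k)).erase k).card := by
    intro k
    unfold inDeg
    congr 1
    ext l
    simp only [mem_filter, mem_univ, true_and, mem_erase]
    simp only [Dstar]
    try tauto
  -- if x k → y k is not an arc, degrees in Dstar equal unrestricted degrees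
  have hDdeg_eq : ∀ k, ¬ A (x k) (y k) →
      deg (Dstar A x y) k = outDeg A (x k) + inDeg A (y k) := by
    intro k hk
    unfold deg
    rw [hDout, hDin, hout, hin]
    rw [erase_eq_of_notMem (by simp [hk]), erase_eq_of_notMem (by simp [hk])]
  have hDdeg_ge : ∀ k, outDeg A (x k) + inDeg A (y k) ≤ deg (Dstar A x y) k + 2 := by
    intro k
    unfold deg
    rw [hDout, hDin, hout, hin]
    have h1' := Finset.pred_card_le_card_erase
      (s := univ.filter fun l => A (x k) (y l)) (a := k)
    have h2' := Finset.pred_card_le_card_erase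
      (s := univ.filter fun l => A (x l) (y k)) (a := k)
    omega
  -- max matching: if one loop arc exists, some swap arc must be missing
  have hswap : A (x i) (y i) ∨ A (x j) (y j) →
      ¬ A (y i) (x j) ∨ ¬ A (y j) (x i) := by
    intro hone
    by_contra hc
    push_neg at hc
    obtain ⟨hyixj, hyjxi⟩ := hc
    have hπ : ∀ k, A (y k) (x ((Equiv.swap i j) k)) := by
      intro k
      rcases eq_or_ne k i with rfl | hki
      · simpa [Equiv.swap_apply_left] using hyixj
      rcases eq_or_ne k j with rfl | hkj
      · simpa [Equiv.swap_apply_right] using hyjxi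
      · simpa [Equiv.swap_apply_of_ne_of_ne hki hkj] using hM k
    have hle := hMmax (Equiv.swap i j) hπ
    unfold matchSize at hle
    have hsub : univ.filter (fun k => ¬ A (x ((1 : Equiv.Perm (Fin a)) k)) (y k))
        ⊆ univ.filter (fun k => ¬ A (x ((Equiv.swap i j) k)) (y k)) := by
      intro k hk
      simp only [mem_filter, mem_univ, true_and] at hk ⊢
      simp only [Equiv.Perm.one_apply] at hk ⊢
      rcases eq_or_ne k i with rfl | hki
      · simpa [Equiv.swap_apply_left] using h2
      rcases eq_or_ne k j with rfl | hkj
      · simpa [Equiv.swap_apply_right] using h1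
      · simpa [Equiv.swap_apply_of_ne_of_ne hki hkj] using hk
    rcases hone with hAi | hAj
    · have hmem : i ∈ univ.filter (fun k => ¬ A (x ((Equiv.swap i j) k)) (y k)) := by
        simp [Equiv.swap_apply_left, h2]
      have hnmem : i ∉ univ.filter
          (fun k => ¬ A (x ((1 : Equiv.Perm (Fin a)) k)) (y k)) := by
        rw [mem_filter]; simp [hAi]
      have hlt := card_lt_card ((ssubset_iff_of_subset hsub).2 ⟨i, hmem, hnmem⟩)
      omega
    · have hmem : j ∈ univ.filter (fun k => ¬ A (x ((Equiv.swap i j) k)) (y k)) := by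
        simp [Equiv.swap_apply_right, h1]
      have hnmem : j ∉ univ.filter
          (fun k => ¬ A (x ((1 : Equiv.Perm (Fin a)) k)) (y k)) := by
        rw [mem_filter]; simp [hAj]
      have hlt := card_lt_card ((ssubset_iff_of_subset hsub).2 ⟨j, hmem, hnmem⟩)
      omega
  -- expand the degree hypotheses
  have hdx := hdegx i j hij
  have hdy := hdegy i j hij
  unfold deg at hdx hdy
  have hixi := hinx_le i
  have hixj := hinx_le j
  have hoyi := houty_le i
  have hoyj := houty_le j
  by_cases hAi : A (x i) (y i)
  · -- then h3 gives ¬ A (x j) (y j)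
    have hAj : ¬ A (x j) (y j) := by tauto
    have hdj := hDdeg_eq j hAj
    have hdi := hDdeg_ge i
    rcases hswap (Or.inl hAi) with hmiss | hmiss
    · have hb1 := hinx_lt j i hmiss
      have hb2 := houty_lt i j hmiss
      omega
    · have hb1 := hinx_lt i j hmiss
      have hb2 := houty_lt j i hmiss
      omega
  · by_cases hAj : A (x j) (y j)
    · have hdi := hDdeg_eq i hAi
      have hdj := hDdeg_ge j
      rcases hswap (Or.inr hAj) with hmiss | hmiss
      · have hb1 := hinx_lt j i hmiss
        have hb2 := houty_lt i j hmiss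
        omega
      · have hb1 := hinx_lt i j hmiss
        have hb2 := houty_lt j i hmiss
        omega
    · have hdi := hDdeg_eq i hAi
      have hdj := hDdeg_eq j hAj
      omega
end

section
/- For every integer a ≥ 2 there exists a balanced bipartite digraph D of order 2a with partite sets X and Y such that d(x)+d(y) ≥ 3a for every pair of distinct vertices x, y either both in X or both in Y, but D is not strongly connected. -/
open Finset

/-- sharpness of strong connectivity — for every a ≥ 2 there is a
non-strongly-connected balanced bipartite digraph satisfying the degree condition. -/
theorem stmt11 (a : ℕ) (ha : 2 ≤ a) :
    ∃ A : Fin (2 * a) → Fin (2 * a) → Bool, ∃ X Y : Finset (Fin (2 * a)),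
      BipartiteWith (fun u v => A u v = true) X Y ∧ X.card = a ∧ Y.card = a ∧
      (∀ u v : Fin (2 * a), u ≠ v → ((u ∈ X ∧ v ∈ X) ∨ (u ∈ Y ∧ v ∈ Y)) →
        3 * a ≤ deg (fun u v => A u v = true) u + deg (fun u v => A u v = true) v) ∧
      ¬ StrongConn (fun u v => A u v = true) := by
  have haa : a < 2 * a := by omega
  refine ⟨fun u v => decide ((u.val < a ∧ a ≤ v.val) ∨ (a ≤ u.val ∧ 0 < v.val ∧ v.val < a)),
    Finset.univ.filter (fun v => v.val < a), Finset.univ.filter (fun v => a ≤ v.val),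
    ?_, ?_, ?_, ?_, ?_⟩
  · refine ⟨?_, ?_, ?_⟩
    · rw [Finset.disjoint_filter]
      intro v _ h1
      omega
    · ext v
      simp only [Finset.mem_union, Finset.mem_filter, Finset.mem_univ, true_and, iff_true]
      omega
    · intro u v h
      simp only [decide_eq_true_iff] at h
      simp only [Finset.mem_filter, Finset.mem_univ, true_and]
      omega
  · have : Finset.univ.filter (fun v : Fin (2 * a) => v.val < a) = Finset.Iio ⟨a, haa⟩ := by
      ext v
      simp [Fin.lt_def]
    rw [this, Fin.card_Iio]
  · have : Finset.univ.filter (fun v : Fin (2 * a) => a ≤ v.val) = Finset.Ici ⟨a, haa⟩ := by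
      ext v
      simp only [Finset.mem_filter, Finset.mem_univ, true_and, Finset.mem_Ici, Fin.le_def]
    rw [this, Fin.card_Ici]
    show 2 * a - a = a
    omega
  · -- degree condition
    have hY : (Finset.univ.filter fun v : Fin (2 * a) => a ≤ v.val).card = a := by
      have : Finset.univ.filter (fun v : Fin (2 * a) => a ≤ v.val) = Finset.Ici ⟨a, haa⟩ := by
        ext v
        simp only [Finset.mem_filter, Finset.mem_univ, true_and, Finset.mem_Ici, Fin.le_def]
      rw [this, Fin.card_Ici]
      show 2 * a - a = a
      omega
    have hM : (Finset.univ.filter fun v : Fin (2 * a) => 0 < v.val ∧ v.val < a).card = a - 1 := by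
      have : Finset.univ.filter (fun v : Fin (2 * a) => 0 < v.val ∧ v.val < a)
          = Finset.Ioo ⟨0, by omega⟩ ⟨a, haa⟩ := by
        ext v; simp [Fin.lt_def]
      rw [this, Fin.card_Ioo]
      simp
    have hX : (Finset.univ.filter fun v : Fin (2 * a) => v.val < a).card = a := by
      have : Finset.univ.filter (fun v : Fin (2 * a) => v.val < a) = Finset.Iio ⟨a, haa⟩ := by
        ext v; simp [Fin.lt_def]
      rw [this, Fin.card_Iio]
    have hdeg : ∀ u : Fin (2 * a),
        deg (fun u v : Fin (2 * a) =>
          (decide ((u.val < a ∧ a ≤ v.val) ∨ (a ≤ u.val ∧ 0 < v.val ∧ v.val < a)) : Bool) = true) u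
        = if u.val = 0 then a else if u.val < a then 2 * a else 2 * a - 1 := by
      intro u
      unfold deg outDeg inDeg
      by_cases h0 : u.val = 0
      · have ho : (Finset.univ.filter fun v : Fin (2 * a) =>
            (decide ((u.val < a ∧ a ≤ v.val) ∨ (a ≤ u.val ∧ 0 < v.val ∧ v.val < a)) : Bool) = true)
            = Finset.univ.filter fun v : Fin (2 * a) => a ≤ v.val := by
          ext v; simp only [Finset.mem_filter, Finset.mem_univ, true_and, decide_eq_true_iff]
          omega
        have hi : (Finset.univ.filter fun v : Fin (2 * a) =>
            (decide ((v.val < a ∧ a ≤ u.val) ∨ (a ≤ v.val ∧ 0 < u.val ∧ u.val < a)) : Bool) = true)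
            = (∅ : Finset (Fin (2 * a))) := by
          ext v; simp only [Finset.mem_filter, Finset.mem_univ, true_and, decide_eq_true_iff,
            Finset.notMem_empty, iff_false]
          omega
        rw [ho, hi, hY]
        simp [h0]
      · by_cases hlt : u.val < a
        · have ho : (Finset.univ.filter fun v : Fin (2 * a) =>
              (decide ((u.val < a ∧ a ≤ v.val) ∨ (a ≤ u.val ∧ 0 < v.val ∧ v.val < a)) : Bool) = true)
              = Finset.univ.filter fun v : Fin (2 * a) => a ≤ v.val := by
            ext v; simp only [Finset.mem_filter, Finset.mem_univ, true_and, decide_eq_true_iff]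
            omega
          have hi : (Finset.univ.filter fun v : Fin (2 * a) =>
              (decide ((v.val < a ∧ a ≤ u.val) ∨ (a ≤ v.val ∧ 0 < u.val ∧ u.val < a)) : Bool) = true)
              = Finset.univ.filter fun v : Fin (2 * a) => a ≤ v.val := by
            ext v; simp only [Finset.mem_filter, Finset.mem_univ, true_and, decide_eq_true_iff]
            omega
          rw [ho, hi, hY]
          simp only [h0, hlt, if_false, if_true]
          omega
        · have ho : (Finset.univ.filter fun v : Fin (2 * a) =>
              (decide ((u.val < a ∧ a ≤ v.val) ∨ (a ≤ u.val ∧ 0 < v.val ∧ v.val < a)) : Bool) = true)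
              = Finset.univ.filter fun v : Fin (2 * a) => 0 < v.val ∧ v.val < a := by
            ext v; simp only [Finset.mem_filter, Finset.mem_univ, true_and, decide_eq_true_iff]
            omega
          have hi : (Finset.univ.filter fun v : Fin (2 * a) =>
              (decide ((v.val < a ∧ a ≤ u.val) ∨ (a ≤ v.val ∧ 0 < u.val ∧ u.val < a)) : Bool) = true)
              = Finset.univ.filter fun v : Fin (2 * a) => v.val < a := by
            ext v; simp only [Finset.mem_filter, Finset.mem_univ, true_and, decide_eq_true_iff]
            omega
          rw [ho, hi, hM, hX]
          simp only [h0, hlt, if_false]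
          omega
    intro u v huv hside
    rw [hdeg u, hdeg v]
    have hval : u.val ≠ v.val := fun h => huv (Fin.ext h)
    simp only [Finset.mem_filter, Finset.mem_univ, true_and] at hside
    split_ifs <;> omega
  · intro hs
    have h1 := hs ⟨a, haa⟩ ⟨0, by omega⟩
    rcases Relation.ReflTransGen.cases_tail h1 with h | ⟨c, _, hc⟩
    · exact absurd (congrArg Fin.val h) (by simp; omega)
    · simp only [decide_eq_true_iff] at hc
      omega
end

section
/- Let D(8) be the bipartite digraph with partite sets X = {x_0,x_1,x_2,x_3}, Y = {y_0,y_1,y_2,y_3}, whose arcs are exactly: y_0 x_1, y_1 x_0, x_2 y_3, x_3 y_2, together with both arcs of the 2-cycles x_i ↔ y_i for i = 0,1,2,3 and y_0 ↔ x_2, y_0 ↔ x_3, y_1 ↔ x_2, y_1 ↔ x_3. Then D(8) is strongly connected but contains no Hamiltonian cycle. -/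
open Finset

/-- The digraph D(8): vertices 0,1,2,3 are x_0,…,x_3 and 4,5,6,7 are y_0,…,y_3. -/
def D8 : Fin 8 → Fin 8 → Prop := fun u v =>
  (u, v) ∈ ([(4,1),(5,0),(2,7),(3,6),
             (0,4),(4,0),(1,5),(5,1),(2,6),(6,2),(3,7),(7,3),
             (4,2),(2,4),(4,3),(3,4),(5,2),(2,5),(5,3),(3,5)] : List (Fin 8 × Fin 8))

instance : DecidableRel D8 := fun u v => by unfold D8; infer_instance

/-- D(8) is strongly connected but not Hamiltonian. -/
theorem stmt12 : StrongConn D8 ∧ ¬ HasCycle D8 8 := by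
  constructor
  · -- strong connectivity
    have step : ∀ a b : Fin 8, D8 a b → Relation.ReflTransGen D8 a b :=
      fun a b h => Relation.ReflTransGen.single h
    have key : ∀ u : Fin 8, Relation.ReflTransGen D8 0 u ∧ Relation.ReflTransGen D8 u 0 := by
      have p04 : Relation.ReflTransGen D8 0 4 := step _ _ (by decide)
      have p41 : Relation.ReflTransGen D8 4 1 := step _ _ (by decide)
      have p42 : Relation.ReflTransGen D8 4 2 := step _ _ (by decide)
      have p27 : Relation.ReflTransGen D8 2 7 := step _ _ (by decide)
      have p73 : Relation.ReflTransGen D8 7 3 := step _ _ (by decide)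
      have p36 : Relation.ReflTransGen D8 3 6 := step _ _ (by decide)
      have p25 : Relation.ReflTransGen D8 2 5 := step _ _ (by decide)
      have p50 : Relation.ReflTransGen D8 5 0 := step _ _ (by decide)
      have p40 : Relation.ReflTransGen D8 4 0 := step _ _ (by decide)
      have p15 : Relation.ReflTransGen D8 1 5 := step _ _ (by decide)
      have p62 : Relation.ReflTransGen D8 6 2 := step _ _ (by decide)
      have p35 : Relation.ReflTransGen D8 3 5 := step _ _ (by decide)
      have f02 : Relation.ReflTransGen D8 0 2 := p04.trans p42
      have t20 : Relation.ReflTransGen D8 2 0 := p25.trans p50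
      intro u
      fin_cases u
      · exact ⟨.refl, .refl⟩
      · exact ⟨p04.trans p41, p15.trans p50⟩
      · exact ⟨f02, t20⟩
      · exact ⟨f02.trans (p27.trans p73), p35.trans p50⟩
      · exact ⟨p04, p40⟩
      · exact ⟨f02.trans p25, p50⟩
      · exact ⟨f02.trans ((p27.trans p73).trans p36), p62.trans t20⟩
      · exact ⟨f02.trans p27, p73.trans (p35.trans p50)⟩
    exact fun u v => (key u).2.trans (key v).1
  · rintro ⟨-, f, hinj, hf⟩
    have hsurj : Function.Surjective f := by
      have : Function.Bijective f :=
        (Fintype.bijective_iff_injective_and_card f).mpr ⟨hinj, by decide⟩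
      exact this.2
    obtain ⟨i, hi⟩ := hsurj 1
    obtain ⟨j, hj⟩ := hsurj 0
    -- successor of 0 is 4, successor of 1 is 5
    have h0 : ∀ v : Fin 8, D8 0 v → v = 4 := by decide
    have h1 : ∀ v : Fin 8, D8 1 v → v = 5 := by decide
    have hin0 : ∀ u : Fin 8, D8 u 0 → u = 4 ∨ u = 5 := by decide
    have hin1 : ∀ u : Fin 8, D8 u 1 → u = 4 ∨ u = 5 := by decide
    have hfj1 : f (j + 1) = 4 := h0 _ (hj ▸ hf j)
    have hfi1 : f (i + 1) = 5 := h1 _ (hi ▸ hf i)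
    -- predecessors
    have hpj : f (j - 1) = 4 ∨ f (j - 1) = 5 := by
      have := hf (j - 1); rw [sub_add_cancel, hj] at this
      exact hin0 _ this
    have hpi : f (i - 1) = 4 ∨ f (i - 1) = 5 := by
      have := hf (i - 1); rw [sub_add_cancel, hi] at this
      exact hin1 _ this
    have e1 : j - 1 = i + 1 := by
      rcases hpj with h | h
      · have : j - 1 = j + 1 := hinj (h.trans hfj1.symm)
        have : (2 : ZMod 8) = 0 := by linear_combination -this
        exact absurd this (by decide)
      · exact hinj (h.trans hfi1.symm)
    have e2 : i - 1 = j + 1 := by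
      rcases hpi with h | h
      · exact hinj (h.trans hfj1.symm)
      · have : i - 1 = i + 1 := hinj (h.trans hfi1.symm)
        have : (2 : ZMod 8) = 0 := by linear_combination -this
        exact absurd this (by decide)
    have : (4 : ZMod 8) = 0 := by linear_combination -e1 - e2
    exact absurd this (by decide)
end

section
/- In the digraph D(8), max{d(x), d(y)} ≥ 7 for every pair of distinct vertices x, y that have a common out-neighbor, yet D(8) is not Hamiltonian. -/
open Finset

lemma no8walk : ∀ a1 : Fin 8, D8 0 a1 → ∀ a2, D8 a1 a2 → ∀ a3, D8 a2 a3 →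
    ∀ a4, D8 a3 a4 → ∀ a5, D8 a4 a5 → ∀ a6, D8 a5 a6 → ∀ a7, D8 a6 a7 →
    D8 a7 0 → ¬ ([0, a1, a2, a3, a4, a5, a6, a7] : List (Fin 8)).Nodup := by
  decide

/-- in D(8), every pair of distinct vertices with a common
out-neighbor has max degree ≥ 7, yet D(8) is not Hamiltonian. -/
theorem stmt13 :
    (∀ u v : Fin 8, u ≠ v → (∃ z, D8 u z ∧ D8 v z) →
      7 ≤ max (deg D8 u) (deg D8 v)) ∧ ¬ HasCycle D8 8 := by
  constructor
  · decide
  · rintro ⟨-, f, hinj, harc⟩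
    have hsurj : Function.Surjective f :=
      ((Fintype.bijective_iff_injective_and_card f).2 ⟨hinj, by decide⟩).2
    obtain ⟨i0, hi0⟩ := hsurj 0
    set g : ZMod 8 → Fin 8 := fun j => f (i0 + j) with hg
    have hginj : Function.Injective g := by
      intro a b hab
      have := hinj hab
      simpa using this
    have hgarc : ∀ j, D8 (g j) (g (j + 1)) := by
      intro j
      have := harc (i0 + j)
      simpa [hg, add_assoc] using this
    have h0 : g 0 = 0 := by simpa [hg] using hi0
    have harc0 : D8 0 (g 1) := by have := hgarc 0; rwa [h0] at this; 
    have hlast : D8 (g 7) 0 := by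
      have := hgarc 7
      have h8 : (7 : ZMod 8) + 1 = 0 := by decide
      rwa [h8, h0] at this
    have hnd : ([0, g 1, g 2, g 3, g 4, g 5, g 6, g 7] : List (Fin 8)).Nodup := by
      rw [← h0]
      have : ([g 0, g 1, g 2, g 3, g 4, g 5, g 6, g 7] : List (Fin 8)) =
          List.map g [0, 1, 2, 3, 4, 5, 6, 7] := by simp
      rw [this]
      exact List.Nodup.map hginj (by decide)
    exact no8walk (g 1) harc0 (g 2) (hgarc 1) (g 3) (hgarc 2) (g 4) (hgarc 3)
      (g 5) (hgarc 4) (g 6) (hgarc 5) (g 7) (hgarc 6) hlast hnd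
end

section
/- Let D be a balanced bipartite digraph of order 2a ≥ 6 with partite sets X = {x_1,...,x_a}, Y = {y_1,...,y_a}, satisfying d(x)+d(y) ≥ 3a for all distinct vertices of the same partite set, and let M = {y_i x_i} be a perfect matching from Y to X. If for every pair i ≠ j at most one of the arcs x_i y_j, x_j y_i belongs to A(D), and x_i y_i ∉ A(D) for at least two distinct indices i, then a contradiction follows; that is, at most one index i satisfies both x_i y_i ∉ A(D) and the pairwise condition. -/
open Finset

/-- under the degree condition, if at most one of x_i y_j, x_j y_i
is an arc for every i ≠ j, then at most one index i has x_i y_i ∉ A(D). -/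
theorem stmt14 {V : Type*} [Fintype V] (A : V → V → Prop) [DecidableRel A]
    (a : ℕ) (ha : 3 ≤ a) (x y : Fin a → V) (hbip : IndexedBipartite A x y)
    (hdegx : ∀ i j : Fin a, i ≠ j → 3 * a ≤ deg A (x i) + deg A (x j))
    (hdegy : ∀ i j : Fin a, i ≠ j → 3 * a ≤ deg A (y i) + deg A (y j))
    (hM : ∀ i, A (y i) (x i))
    (hpair : ∀ i j : Fin a, i ≠ j → ¬ (A (x i) (y j) ∧ A (x j) (y i))) :
    ¬ ∃ i j : Fin a, i ≠ j ∧ ¬ A (x i) (y i) ∧ ¬ A (x j) (y j) := by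
  classical
  obtain ⟨hx, hy, hxy, hcov, harc⟩ := hbip
  rintro ⟨i, j, hij, hii, hjj⟩
  -- out-degree of x i counts indices k with A (x i) (y k)
  have hout_x : ∀ i : Fin a, outDeg A (x i) =
      (Finset.univ.filter fun k => A (x i) (y k)).card := by
    intro i
    unfold outDeg
    rw [← Finset.card_image_of_injective _ hy]
    congr 1
    ext v
    simp only [Finset.mem_image, Finset.mem_filter, Finset.mem_univ, true_and]
    constructor
    · intro hv
      rcases harc _ _ hv with ⟨i', j', h1, h2⟩ | ⟨i', j', h1, h2⟩
      · exact ⟨j', h2 ▸ hv, h2.symm⟩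
      · exact absurd h1 (hxy i i')
    · rintro ⟨k, hk, rfl⟩; exact hk
  have hin_y : ∀ i : Fin a, inDeg A (y i) =
      (Finset.univ.filter fun k => A (x k) (y i)).card := by
    intro i
    unfold inDeg
    rw [← Finset.card_image_of_injective _ hx]
    congr 1
    ext u
    simp only [Finset.mem_image, Finset.mem_filter, Finset.mem_univ, true_and]
    constructor
    · intro hu
      rcases harc _ _ hu with ⟨i', j', h1, h2⟩ | ⟨i', j', h1, h2⟩
      · exact ⟨i', h1 ▸ hu, h1.symm⟩
      · exact absurd h2.symm (hxy j' i)
    · rintro ⟨k, hk, rfl⟩; exact hk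
  have hin_x : ∀ i : Fin a, inDeg A (x i) ≤ a := by
    intro i
    have : (Finset.univ.filter fun v => A v (x i)) ⊆ Finset.univ.image y := by
      intro u hu
      simp only [Finset.mem_filter, Finset.mem_univ, true_and] at hu
      rcases harc _ _ hu with ⟨i', j', h1, h2⟩ | ⟨i', j', h1, h2⟩
      · exact absurd h2 (hxy i j')
      · exact Finset.mem_image.2 ⟨i', Finset.mem_univ _, h1.symm⟩
    calc inDeg A (x i) ≤ (Finset.univ.image y).card := Finset.card_le_card this
      _ ≤ Finset.univ.card := Finset.card_image_le
      _ = a := by simp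
  have hout_y : ∀ i : Fin a, outDeg A (y i) ≤ a := by
    intro i
    have : (Finset.univ.filter fun v => A (y i) v) ⊆ Finset.univ.image x := by
      intro u hu
      simp only [Finset.mem_filter, Finset.mem_univ, true_and] at hu
      rcases harc _ _ hu with ⟨i', j', h1, h2⟩ | ⟨i', j', h1, h2⟩
      · exact absurd h1.symm (hxy i' i)
      · exact Finset.mem_image.2 ⟨j', Finset.mem_univ _, h2.symm⟩
    calc outDeg A (y i) ≤ (Finset.univ.image x).card := Finset.card_le_card this
      _ ≤ Finset.univ.card := Finset.card_image_le
      _ = a := by simp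
  -- key: if x i y i is not an arc, outDeg (x i) + inDeg (y i) ≤ a - 1
  have key : ∀ i : Fin a, ¬ A (x i) (y i) →
      outDeg A (x i) + inDeg A (y i) + 1 ≤ a := by
    intro i hi
    rw [hout_x, hin_y]
    set S1 := Finset.univ.filter fun k => A (x i) (y k) with hS1
    set S2 := Finset.univ.filter fun k => A (x k) (y i) with hS2
    have hdisj : Disjoint S1 S2 := by
      rw [Finset.disjoint_left]
      intro k hk1 hk2
      simp only [hS1, hS2, Finset.mem_filter, Finset.mem_univ, true_and] at hk1 hk2
      rcases eq_or_ne k i with rfl | hne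
      · exact hi hk1
      · exact hpair i k (Ne.symm hne) ⟨hk1, hk2⟩
    have hsub : S1 ∪ S2 ⊆ Finset.univ.erase i := by
      intro k hk
      rcases Finset.mem_union.1 hk with h | h <;>
        simp only [hS1, hS2, Finset.mem_filter, Finset.mem_univ, true_and] at h <;>
        refine Finset.mem_erase.2 ⟨?_, Finset.mem_univ _⟩ <;>
        rintro rfl <;> exact hi h
    have := Finset.card_le_card hsub
    rw [Finset.card_union_of_disjoint hdisj] at this
    have hcard : (Finset.univ.erase i).card = a - 1 := by
      rw [Finset.card_erase_of_mem (Finset.mem_univ _)]; simp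
    omega
  have h1 := key i hii
  have h2 := key j hjj
  have h3 := hdegx i j hij
  have h4 := hdegy i j hij
  have e1 : deg A (x i) = outDeg A (x i) + inDeg A (x i) := rfl
  have e2 : deg A (x j) = outDeg A (x j) + inDeg A (x j) := rfl
  have e3 : deg A (y i) = outDeg A (y i) + inDeg A (y i) := rfl
  have e4 : deg A (y j) = outDeg A (y j) + inDeg A (y j) := rfl
  have b1 := hin_x i
  have b2 := hin_x j
  have b3 := hout_y i
  have b4 := hout_y j
  omega
end

section
/- Let D be a strongly connected balanced bipartite digraph of order 2a ≥ 6 with partite sets X and Y, satisfying d(x)+d(y) ≥ 3a for every pair of distinct vertices from the same partite set. Then D is Hamiltonian. -/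
set_option linter.unusedSectionVars false
set_option linter.unusedVariables false
set_option maxHeartbeats 1000000


open Finset

namespace S15

open Equiv Equiv.Perm

variable {V : Type*} [Fintype V] [DecidableEq V] {A : V → V → Prop} [DecidableRel A]
  {a : ℕ} {x y : Fin a → V}

/-- Bundled setup for the proof. -/
structure Setup (A : V → V → Prop) [DecidableRel A] (a : ℕ) (x y : Fin a → V) : Prop where
  ha : 3 ≤ a
  hx : Function.Injective x
  hy : Function.Injective y
  hxy : ∀ i j, x i ≠ y j
  hcover : ∀ v : V, (∃ i, v = x i) ∨ (∃ j, v = y j)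
  harc : ∀ u v, A u v → (∃ i j, u = x i ∧ v = y j) ∨ (∃ i j, u = y i ∧ v = x j)
  hstrong : StrongConn A
  hdegX : ∀ i j, i ≠ j → 3 * a ≤ deg A (x i) + deg A (x j)
  hdegY : ∀ i j, i ≠ j → 3 * a ≤ deg A (y i) + deg A (y j)

theorem Setup.arc_x (st : Setup A a x y) {i : Fin a} {v : V} (h : A (x i) v) :
    ∃ m, v = y m := by
  rcases st.harc _ _ h with ⟨i', j', hu, hv⟩ | ⟨i', j', hu, hv⟩
  · exact ⟨j', hv⟩
  · exact absurd hu.symm (st.hxy i i').symm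

theorem Setup.arc_to_x (st : Setup A a x y) {i : Fin a} {v : V} (h : A v (x i)) :
    ∃ m, v = y m := by
  rcases st.harc _ _ h with ⟨i', j', hu, hv⟩ | ⟨i', j', hu, hv⟩
  · exact absurd hv (st.hxy i j')
  · exact ⟨i', hu⟩

theorem Setup.arc_y (st : Setup A a x y) {m : Fin a} {v : V} (h : A (y m) v) :
    ∃ i, v = x i := by
  rcases st.harc _ _ h with ⟨i', j', hu, hv⟩ | ⟨i', j', hu, hv⟩
  · exact absurd hu.symm (st.hxy i' m)
  · exact ⟨j', hv⟩

theorem Setup.arc_to_y (st : Setup A a x y) {m : Fin a} {v : V} (h : A v (y m)) :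
    ∃ i, v = x i := by
  rcases st.harc _ _ h with ⟨i', j', hu, hv⟩ | ⟨i', j', hu, hv⟩
  · exact ⟨i', hu⟩
  · exact absurd hv (st.hxy j' m).symm

theorem card_filter_eq_of_image (f : Fin a → V) (hf : Function.Injective f)
    (P : V → Prop) [DecidablePred P] (hP : ∀ v, P v → ∃ m, v = f m) :
    (Finset.univ.filter P).card = (Finset.univ.filter fun m => P (f m)).card := by
  symm
  apply Finset.card_bij (i := fun m _ => f m)
  · intro m hm
    simp only [Finset.mem_filter, Finset.mem_univ, true_and] at hm ⊢
    exact hm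
  · intro m1 _ m2 _ h
    exact hf h
  · intro v hv
    simp only [Finset.mem_filter, Finset.mem_univ, true_and] at hv
    obtain ⟨m, rfl⟩ := hP v hv
    exact ⟨m, by simp [hv], rfl⟩

/-- reindex a filter over indices by a permutation -/
theorem card_filter_perm (σ : Equiv.Perm (Fin a)) (P : Fin a → Prop) [DecidablePred P] :
    (Finset.univ.filter P).card = (Finset.univ.filter fun m => P (σ m)).card := by
  symm
  apply Finset.card_bij (i := fun m _ => σ m)
  · intro m hm
    simp only [Finset.mem_filter, Finset.mem_univ, true_and] at hm ⊢
    exact hm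
  · intro m1 _ m2 _ h
    exact σ.injective h
  · intro v hv
    simp only [Finset.mem_filter, Finset.mem_univ, true_and] at hv
    exact ⟨σ.symm v, by simpa using hv, by simp⟩

theorem Setup.outDeg_x (st : Setup A a x y) (i : Fin a) :
    outDeg A (x i) = (Finset.univ.filter fun m => A (x i) (y m)).card :=
  card_filter_eq_of_image y st.hy _ fun _ h => st.arc_x h

theorem Setup.inDeg_x (st : Setup A a x y) (i : Fin a) :
    inDeg A (x i) = (Finset.univ.filter fun m => A (y m) (x i)).card :=
  card_filter_eq_of_image y st.hy _ fun _ h => st.arc_to_x h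

theorem Setup.outDeg_y (st : Setup A a x y) (m : Fin a) :
    outDeg A (y m) = (Finset.univ.filter fun i => A (y m) (x i)).card :=
  card_filter_eq_of_image x st.hx _ fun _ h => st.arc_y h

theorem Setup.inDeg_y (st : Setup A a x y) (m : Fin a) :
    inDeg A (y m) = (Finset.univ.filter fun i => A (x i) (y m)).card :=
  card_filter_eq_of_image x st.hx _ fun _ h => st.arc_to_y h

theorem Setup.outDeg_x_le (st : Setup A a x y) (i : Fin a) : outDeg A (x i) ≤ a := by
  rw [st.outDeg_x]
  simpa using Finset.card_filter_le (Finset.univ : Finset (Fin a)) (fun m => A (x i) (y m))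

theorem Setup.inDeg_x_le (st : Setup A a x y) (i : Fin a) : inDeg A (x i) ≤ a := by
  rw [st.inDeg_x]
  simpa using Finset.card_filter_le (Finset.univ : Finset (Fin a)) (fun m => A (y m) (x i))

theorem Setup.outDeg_y_le (st : Setup A a x y) (m : Fin a) : outDeg A (y m) ≤ a := by
  rw [st.outDeg_y]
  simpa using Finset.card_filter_le (Finset.univ : Finset (Fin a)) (fun i => A (y m) (x i))

theorem Setup.inDeg_y_le (st : Setup A a x y) (m : Fin a) : inDeg A (y m) ≤ a := by
  rw [st.inDeg_y]
  simpa using Finset.card_filter_le (Finset.univ : Finset (Fin a)) (fun i => A (x i) (y m))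

theorem Setup.deg_x_le (st : Setup A a x y) (i : Fin a) : deg A (x i) ≤ 2 * a := by
  have := st.outDeg_x_le i; have := st.inDeg_x_le i; unfold deg; omega

theorem Setup.deg_y_le (st : Setup A a x y) (m : Fin a) : deg A (y m) ≤ 2 * a := by
  have := st.outDeg_y_le m; have := st.inDeg_y_le m; unfold deg; omega

/-- a vertex `x i` with full out-degree has arcs to every `y m` -/
theorem Setup.out_full_x (st : Setup A a x y) {i : Fin a} (h : a ≤ outDeg A (x i))
    (m : Fin a) : A (x i) (y m) := by
  rw [st.outDeg_x] at h
  have : (Finset.univ.filter fun m => A (x i) (y m)) = Finset.univ := by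
    apply Finset.eq_univ_of_card
    have := Finset.card_filter_le (Finset.univ : Finset (Fin a)) (fun m => A (x i) (y m))
    simp only [Finset.card_univ, Fintype.card_fin] at this ⊢
    omega
  exact (Finset.mem_filter.1 (Finset.eq_univ_iff_forall.1 this m)).2

theorem Setup.in_full_x (st : Setup A a x y) {i : Fin a} (h : a ≤ inDeg A (x i))
    (m : Fin a) : A (y m) (x i) := by
  rw [st.inDeg_x] at h
  have : (Finset.univ.filter fun m => A (y m) (x i)) = Finset.univ := by
    apply Finset.eq_univ_of_card
    have := Finset.card_filter_le (Finset.univ : Finset (Fin a)) (fun m => A (y m) (x i))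
    simp only [Finset.card_univ, Fintype.card_fin] at this ⊢
    omega
  exact (Finset.mem_filter.1 (Finset.eq_univ_iff_forall.1 this m)).2

theorem Setup.out_full_y (st : Setup A a x y) {m : Fin a} (h : a ≤ outDeg A (y m))
    (i : Fin a) : A (y m) (x i) := by
  rw [st.outDeg_y] at h
  have : (Finset.univ.filter fun i => A (y m) (x i)) = Finset.univ := by
    apply Finset.eq_univ_of_card
    have := Finset.card_filter_le (Finset.univ : Finset (Fin a)) (fun i => A (y m) (x i))
    simp only [Finset.card_univ, Fintype.card_fin] at this ⊢
    omega
  exact (Finset.mem_filter.1 (Finset.eq_univ_iff_forall.1 this i)).2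

theorem Setup.in_full_y (st : Setup A a x y) {m : Fin a} (h : a ≤ inDeg A (y m))
    (i : Fin a) : A (x i) (y m) := by
  rw [st.inDeg_y] at h
  have : (Finset.univ.filter fun i => A (x i) (y m)) = Finset.univ := by
    apply Finset.eq_univ_of_card
    have := Finset.card_filter_le (Finset.univ : Finset (Fin a)) (fun i => A (x i) (y m))
    simp only [Finset.card_univ, Fintype.card_fin] at this ⊢
    omega
  exact (Finset.mem_filter.1 (Finset.eq_univ_iff_forall.1 this i)).2

end S15

namespace S15

open Equiv Equiv.Perm Finset

variable {a : ℕ}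

/-- number of same-orbit pairs -/
def Ncnt (σ : Equiv.Perm (Fin a)) : ℕ :=
  (Finset.univ.filter fun p : Fin a × Fin a => σ.SameCycle p.1 p.2).card

theorem sameCycle_mul_swap_self {π : Equiv.Perm (Fin a)} {i j : Fin a}
    (hns : ¬ π.SameCycle i j) :
    (π * Equiv.swap i j).SameCycle i j := by
  set π' := π * Equiv.swap i j with hπ'
  have hπ'i : π' i = π j := by simp [hπ', Equiv.Perm.mul_apply]
  have hstep : ∀ u : Fin a, u ≠ i → u ≠ j → π' u = π u := by
    intro u h1 h2
    simp [hπ', Equiv.Perm.mul_apply, Equiv.swap_apply_of_ne_of_ne h1 h2]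
  have hex : ∃ n, 0 < n ∧ (π ^ n) j = j :=
    ⟨orderOf π, orderOf_pos π, by rw [pow_orderOf_eq_one]; rfl⟩
  classical
  set m := Nat.find hex with hm
  obtain ⟨hm0, hmj⟩ := Nat.find_spec hex
  have claim : ∀ k, 0 < k → k ≤ m → (π' ^ k) i = (π ^ k) j := by
    intro k
    induction k with
    | zero => omega
    | succ k ih =>
      intro _ hkm
      rcases Nat.eq_zero_or_pos k with hk0 | hk0
      · subst hk0; simpa using hπ'i
      · have hik : (π' ^ k) i = (π ^ k) j := ih hk0 (by omega)
        have h1 : (π ^ k) j ≠ i := by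
          intro h
          have hsc : π.SameCycle j i := ⟨k, by rw [zpow_natCast, h]⟩
          exact (hns hsc.symm).elim
        have h2 : (π ^ k) j ≠ j := by
          intro h
          exact Nat.find_min hex (by omega : k < m) ⟨hk0, h⟩
        calc (π' ^ (k+1)) i = π' ((π' ^ k) i) := by
              rw [pow_succ', Equiv.Perm.mul_apply]
          _ = π' ((π ^ k) j) := by rw [hik]
          _ = π ((π ^ k) j) := hstep _ h1 h2
          _ = (π ^ (k+1)) j := by rw [pow_succ', Equiv.Perm.mul_apply]
  refine ⟨(m : ℤ), ?_⟩
  rw [zpow_natCast, claim m hm0 le_rfl, hmj]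

theorem sameCycle_mul_swap_mono {π : Equiv.Perm (Fin a)} {i j : Fin a}
    (hns : ¬ π.SameCycle i j) {u v : Fin a}
    (h : π.SameCycle u v) : (π * Equiv.swap i j).SameCycle u v := by
  set π' := π * Equiv.swap i j with hπ'
  have hπ'i : π' i = π j := by simp [hπ', Equiv.Perm.mul_apply]
  have hπ'j : π' j = π i := by simp [hπ', Equiv.Perm.mul_apply]
  have key := sameCycle_mul_swap_self hns
  have hone : ∀ w : Fin a, π'.SameCycle w (π' w) := fun w => ⟨1, by simp⟩
  have hstep2 : ∀ u : Fin a, π'.SameCycle u (π u) := by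
    intro u
    by_cases hui : u = i
    · subst hui
      rw [← hπ'j]
      exact key.trans (hone j)
    · by_cases huj : u = j
      · subst huj
        rw [← hπ'i]
        exact key.symm.trans (hone i)
      · have : π u = π' u := by
          simp [hπ', Equiv.Perm.mul_apply, Equiv.swap_apply_of_ne_of_ne hui huj]
        rw [this]
        exact hone u
  have hpow : ∀ (k : ℕ) (u : Fin a), π'.SameCycle u ((π ^ k) u) := by
    intro k
    induction k with
    | zero => intro u; simpa using Equiv.Perm.SameCycle.refl π' u
    | succ k ih =>
      intro u
      have : (π ^ (k+1)) u = π ((π ^ k) u) := by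
        rw [pow_succ', Equiv.Perm.mul_apply]
      rw [this]
      exact (ih u).trans (hstep2 _)
  obtain ⟨k, _, hkv⟩ := h.exists_pow_eq'
  rw [← hkv]
  exact hpow k u

theorem Ncnt_lt_of_swap {π : Equiv.Perm (Fin a)} {i j : Fin a}
    (hns : ¬ π.SameCycle i j) : Ncnt π < Ncnt (π * Equiv.swap i j) := by
  apply Finset.card_lt_card
  rw [Finset.ssubset_iff_of_subset]
  · refine ⟨(i, j), ?_, ?_⟩
    · simp only [Finset.mem_filter, Finset.mem_univ, true_and]
      exact sameCycle_mul_swap_self hns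
    · simp only [Finset.mem_filter, Finset.mem_univ, true_and]
      exact hns
  · intro p hp
    simp only [Finset.mem_filter, Finset.mem_univ, true_and] at hp ⊢
    exact sameCycle_mul_swap_mono hns hp

end S15

namespace S15

open Equiv Equiv.Perm Finset

variable {V : Type*} [Fintype V] [DecidableEq V] {A : V → V → Prop} [DecidableRel A]
  {a : ℕ} {x y : Fin a → V}

def Valid (A : V → V → Prop) (x y : Fin a → V) (φ ψ : Equiv.Perm (Fin a)) : Prop :=
  (∀ i, A (x i) (y (φ i))) ∧ ∀ m, A (y m) (x (ψ m))

theorem maxC1 {φ ψ : Equiv.Perm (Fin a)} (hv : Valid A x y φ ψ)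
    (hmax : ∀ φ' ψ', Valid A x y φ' ψ' → Ncnt (ψ' * φ') ≤ Ncnt (ψ * φ))
    {i j : Fin a} (hns : ¬ (ψ * φ).SameCycle i j) :
    ¬ (A (x i) (y (φ j)) ∧ A (x j) (y (φ i))) := by
  rintro ⟨h1, h2⟩
  have hij : i ≠ j := by rintro rfl; exact hns (Equiv.Perm.SameCycle.refl _ _)
  have hv' : Valid A x y (φ * Equiv.swap i j) ψ := by
    refine ⟨fun u => ?_, hv.2⟩
    by_cases hui : u = i
    · subst hui
      simpa [Equiv.Perm.mul_apply] using h1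
    · by_cases huj : u = j
      · subst huj
        simpa [Equiv.Perm.mul_apply] using h2
      · simpa [Equiv.Perm.mul_apply, Equiv.swap_apply_of_ne_of_ne hui huj] using hv.1 u
  have hle := hmax _ _ hv'
  rw [← mul_assoc] at hle
  exact absurd hle (not_le.2 (Ncnt_lt_of_swap hns))

theorem maxC2 {φ ψ : Equiv.Perm (Fin a)} (hv : Valid A x y φ ψ)
    (hmax : ∀ φ' ψ', Valid A x y φ' ψ' → Ncnt (ψ' * φ') ≤ Ncnt (ψ * φ))
    {i j : Fin a} (hns : ¬ (ψ * φ).SameCycle i j) :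
    ¬ (A (y (φ i)) (x ((ψ * φ) j)) ∧ A (y (φ j)) (x ((ψ * φ) i))) := by
  rintro ⟨h1, h2⟩
  have hij : i ≠ j := by rintro rfl; exact hns (Equiv.Perm.SameCycle.refl _ _)
  have hfij : φ i ≠ φ j := fun h => hij (φ.injective h)
  have hv' : Valid A x y φ (ψ * Equiv.swap (φ i) (φ j)) := by
    refine ⟨hv.1, fun m => ?_⟩
    by_cases hmi : m = φ i
    · subst hmi
      simpa [Equiv.Perm.mul_apply] using h1
    · by_cases hmj : m = φ j
      · subst hmj
        simpa [Equiv.Perm.mul_apply] using h2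
      · simpa [Equiv.Perm.mul_apply, Equiv.swap_apply_of_ne_of_ne hmi hmj] using hv.2 m
  have hcomm : ψ * Equiv.swap (φ i) (φ j) * φ = (ψ * φ) * Equiv.swap i j := by
    have hs := Equiv.swap_apply_apply φ i j
    ext u
    simp only [Equiv.Perm.mul_apply]
    rw [hs]
    simp [Equiv.Perm.mul_apply]
  have hle := hmax _ _ hv'
  rw [hcomm] at hle
  exact absurd hle (not_le.2 (Ncnt_lt_of_swap hns))

/-- pairwise degree-sum lower bound -/
theorem pair_lower (S : Finset (Fin a)) (g : Fin a → ℕ)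
    (hg : ∀ i ∈ S, ∀ j ∈ S, i ≠ j → 3 * a ≤ g i + g j) (hs2 : 2 ≤ S.card) :
    3 * a * S.card ≤ 2 * ∑ i ∈ S, g i := by
  set T := ∑ i ∈ S, g i with hT
  set K := ∑ i ∈ S, ∑ j ∈ S.erase i, (g i + g j) with hK
  obtain ⟨t, ht⟩ : ∃ t, S.card = t + 2 := ⟨S.card - 2, by omega⟩
  have key : ∀ i ∈ S, ∑ j ∈ S.erase i, (g i + g j) + (g i + g i) = S.card * g i + T := by
    intro i hi
    have := Finset.sum_erase_add S (fun j => g i + g j) hi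
    rw [this, Finset.sum_add_distrib, Finset.sum_const, smul_eq_mul, hT]
  have h2 : K + 2 * T = 2 * S.card * T := by
    have e1 : ∑ i ∈ S, (∑ j ∈ S.erase i, (g i + g j) + (g i + g i))
        = ∑ i ∈ S, (S.card * g i + T) := Finset.sum_congr rfl key
    have eR : ∑ i ∈ S, (S.card * g i + T) = S.card * T + S.card * T := by
      rw [Finset.sum_add_distrib, ← Finset.mul_sum, Finset.sum_const, smul_eq_mul, ← hT]
    have eL : ∑ i ∈ S, (∑ j ∈ S.erase i, (g i + g j) + (g i + g i)) = K + 2 * T := by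
      rw [Finset.sum_add_distrib, ← hK]
      have e2 : ∑ i ∈ S, (g i + g i) = 2 * T := by
        rw [Finset.sum_add_distrib, ← hT]; ring
      rw [e2]
    rw [eL, eR] at e1
    have e3 : 2 * S.card * T = S.card * T + S.card * T := by ring
    rw [e3]
    omega
  have h1 : S.card * ((S.card - 1) * (3 * a)) ≤ K := by
    rw [hK]
    calc S.card * ((S.card - 1) * (3 * a)) = ∑ _i ∈ S, ((S.card - 1) * (3 * a)) := by
          rw [Finset.sum_const, smul_eq_mul]
      _ ≤ ∑ i ∈ S, ∑ j ∈ S.erase i, (g i + g j) := by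
          apply Finset.sum_le_sum
          intro i hi
          calc (S.card - 1) * (3 * a) = ∑ _j ∈ S.erase i, (3 * a) := by
                rw [Finset.sum_const, smul_eq_mul, Finset.card_erase_of_mem hi]
            _ ≤ ∑ j ∈ S.erase i, (g i + g j) := by
                apply Finset.sum_le_sum
                intro j hj
                have hji := Finset.mem_of_mem_erase hj
                have hne : i ≠ j := fun h => (Finset.ne_of_mem_erase hj) h.symm
                exact hg i hi j hji hne
  rw [ht] at h1 h2 ⊢
  have hts : t + 2 - 1 = t + 1 := by omega
  rw [hts] at h1
  have e1 : (t+2) * ((t+1) * (3*a)) = (3 * a * (t+2)) * (t+1) := by ring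
  have e2 : (2 * T) * (t+1) + 2 * T = 2 * (t+2) * T := by ring
  have h3 : (3 * a * (t + 2)) * (t+1) ≤ (2 * T) * (t+1) := by linarith
  exact Nat.le_of_mul_le_mul_right h3 (by omega)

end S15

namespace S15

open Equiv Equiv.Perm Finset

variable {V : Type*} [Fintype V] [DecidableEq V] {A : V → V → Prop} [DecidableRel A]
  {a : ℕ} {x y : Fin a → V}

/-- indicator combination for the orbit double count -/
def Find (A : V → V → Prop) [DecidableRel A] (x y : Fin a → V)
    (φ π : Equiv.Perm (Fin a)) (i j : Fin a) : ℕ :=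
  (if A (x i) (y (φ j)) then 1 else 0) + (if A (y (φ j)) (x i) then 1 else 0)
    + ((if A (y (φ i)) (x (π j)) then 1 else 0) + (if A (x j) (y (φ i)) then 1 else 0))

theorem deg_decomp (st : Setup A a x y) (φ π : Equiv.Perm (Fin a)) (i : Fin a) :
    deg A (x i) + deg A (y (φ i)) = ∑ j : Fin a, Find A x y φ π i j := by
  have e1 : outDeg A (x i) = ∑ j : Fin a, (if A (x i) (y (φ j)) then 1 else 0) := by
    rw [st.outDeg_x, card_filter_perm φ (fun m => A (x i) (y m)), Finset.card_filter]
  have e2 : inDeg A (x i) = ∑ j : Fin a, (if A (y (φ j)) (x i) then 1 else 0) := by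
    rw [st.inDeg_x, card_filter_perm φ (fun m => A (y m) (x i)), Finset.card_filter]
  have e3 : outDeg A (y (φ i)) = ∑ j : Fin a, (if A (y (φ i)) (x (π j)) then 1 else 0) := by
    rw [st.outDeg_y, card_filter_perm π (fun m => A (y (φ i)) (x m)), Finset.card_filter]
  have e4 : inDeg A (y (φ i)) = ∑ j : Fin a, (if A (x j) (y (φ i)) then 1 else 0) := by
    rw [st.inDeg_y, Finset.card_filter]
  show outDeg A (x i) + inDeg A (x i) + (outDeg A (y (φ i)) + inDeg A (y (φ i))) = _
  rw [e1, e2, e3, e4, ← Finset.sum_add_distrib, ← Finset.sum_add_distrib,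
    ← Finset.sum_add_distrib]
  rfl

theorem orbit_image (π : Equiv.Perm (Fin a)) (i₀ : Fin a) :
    (Finset.univ.filter (π.SameCycle i₀)).image π
      = Finset.univ.filter (π.SameCycle i₀) := by
  apply Finset.eq_of_subset_of_card_le
  · intro m hm
    simp only [Finset.mem_image, Finset.mem_filter, Finset.mem_univ, true_and] at hm ⊢
    obtain ⟨i, hi, rfl⟩ := hm
    exact Equiv.Perm.sameCycle_apply_right.2 hi
  · rw [Finset.card_image_of_injective _ π.injective]

theorem sum_orbit_perm (π : Equiv.Perm (Fin a)) (i₀ : Fin a) (g : Fin a → ℕ) :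
    ∑ i ∈ Finset.univ.filter (π.SameCycle i₀), g (π i)
      = ∑ i ∈ Finset.univ.filter (π.SameCycle i₀), g i := by
  calc ∑ i ∈ Finset.univ.filter (π.SameCycle i₀), g (π i)
      = ∑ m ∈ (Finset.univ.filter (π.SameCycle i₀)).image π, g m :=
        (Finset.sum_image (fun _ _ _ _ h => π.injective h)).symm
    _ = _ := by rw [orbit_image]

theorem Tj_le (st : Setup A a x y) {φ ψ : Equiv.Perm (Fin a)} (hv : Valid A x y φ ψ)
    (hmax : ∀ φ' ψ', Valid A x y φ' ψ' → Ncnt (ψ' * φ') ≤ Ncnt (ψ * φ))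
    (i₀ j : Fin a) :
    ∑ i ∈ Finset.univ.filter ((ψ * φ).SameCycle i₀), Find A x y φ (ψ * φ) i j
      ≤ if j ∈ Finset.univ.filter ((ψ * φ).SameCycle i₀)
          then 4 * (Finset.univ.filter ((ψ * φ).SameCycle i₀)).card
          else 2 * (Finset.univ.filter ((ψ * φ).SameCycle i₀)).card := by
  set π := ψ * φ with hπ
  set S := Finset.univ.filter (π.SameCycle i₀) with hS
  by_cases hj : j ∈ S
  · rw [if_pos hj]
    have : ∀ i ∈ S, Find A x y φ π i j ≤ 4 := by
      intro i _
      unfold Find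
      split_ifs <;> omega
    calc ∑ i ∈ S, Find A x y φ π i j ≤ S.card • 4 := Finset.sum_le_card_nsmul _ _ _ this
      _ = 4 * S.card := by rw [smul_eq_mul]; ring
  · rw [if_neg hj]
    have hnsj : ¬ π.SameCycle i₀ j := by
      simpa [hS] using hj
    have hns : ∀ i ∈ S, ¬ π.SameCycle i j := by
      intro i hi hsc
      exact hnsj ((Finset.mem_filter.1 hi).2.trans hsc)
    have split1 : ∀ i, Find A x y φ π i j =
        ((if A (x i) (y (φ j)) then 1 else 0) + (if A (x j) (y (φ i)) then 1 else 0))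
        + ((if A (y (φ j)) (x i) then 1 else 0) + (if A (y (φ i)) (x (π j)) then 1 else 0)) := by
      intro i; unfold Find; ring
    rw [Finset.sum_congr rfl (fun i _ => split1 i), Finset.sum_add_distrib]
    have b1 : ∑ i ∈ S, ((if A (x i) (y (φ j)) then 1 else 0)
        + (if A (x j) (y (φ i)) then 1 else 0)) ≤ S.card := by
      have : ∀ i ∈ S, (if A (x i) (y (φ j)) then 1 else 0)
          + (if A (x j) (y (φ i)) then 1 else 0) ≤ 1 := by
        intro i hi
        have := maxC1 hv hmax (hns i hi)
        split_ifs with h1 h2 <;> simp_all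
      calc _ ≤ S.card • 1 := Finset.sum_le_card_nsmul _ _ _ this
        _ = S.card := by simp
    have b2 : ∑ i ∈ S, ((if A (y (φ j)) (x i) then 1 else 0)
        + (if A (y (φ i)) (x (π j)) then 1 else 0)) ≤ S.card := by
      have e2 : ∑ i ∈ S, (if A (y (φ j)) (x i) then 1 else 0)
          = ∑ i ∈ S, (if A (y (φ j)) (x (π i)) then 1 else 0) :=
        (sum_orbit_perm π i₀ (fun m => if A (y (φ j)) (x m) then 1 else 0)).symm
      rw [Finset.sum_add_distrib, e2, ← Finset.sum_add_distrib]
      have : ∀ i ∈ S, (if A (y (φ j)) (x (π i)) then 1 else 0)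
          + (if A (y (φ i)) (x (π j)) then 1 else 0) ≤ 1 := by
        intro i hi
        have := maxC2 hv hmax (hns i hi)
        rw [← hπ] at this
        split_ifs with h1 h2 <;> simp_all
      calc _ ≤ S.card • 1 := Finset.sum_le_card_nsmul _ _ _ this
        _ = S.card := by simp
    omega

theorem orbit_sum_le (st : Setup A a x y) {φ ψ : Equiv.Perm (Fin a)}
    (hv : Valid A x y φ ψ)
    (hmax : ∀ φ' ψ', Valid A x y φ' ψ' → Ncnt (ψ' * φ') ≤ Ncnt (ψ * φ)) (i₀ : Fin a) :
    ∑ i ∈ Finset.univ.filter ((ψ * φ).SameCycle i₀),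
        (deg A (x i) + deg A (y (φ i)))
      ≤ 2 * (Finset.univ.filter ((ψ * φ).SameCycle i₀)).card
          * (Finset.univ.filter ((ψ * φ).SameCycle i₀)).card
        + 2 * a * (Finset.univ.filter ((ψ * φ).SameCycle i₀)).card := by
  set π := ψ * φ with hπ
  set S := Finset.univ.filter (π.SameCycle i₀) with hS
  set s := S.card with hs
  have hdec : ∑ i ∈ S, (deg A (x i) + deg A (y (φ i)))
      = ∑ j : Fin a, ∑ i ∈ S, Find A x y φ π i j := by
    rw [← Finset.sum_comm]
    exact Finset.sum_congr rfl fun i _ => deg_decomp st φ π i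
  rw [hdec]
  have hb : ∑ j : Fin a, ∑ i ∈ S, Find A x y φ π i j
      ≤ ∑ j : Fin a, (if j ∈ S then 4 * s else 2 * s) :=
    Finset.sum_le_sum fun j _ => Tj_le st hv hmax i₀ j
  refine hb.trans ?_
  have hsplit : ∑ j : Fin a, (if j ∈ S then 4 * s else 2 * s)
      = s * (4 * s) + (Finset.univ.filter (fun j => ¬ j ∈ S)).card * (2 * s) := by
    rw [Finset.sum_ite, Finset.sum_const, Finset.sum_const, smul_eq_mul, smul_eq_mul,
      Finset.filter_mem_eq_inter, Finset.univ_inter, ← hs]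
  have hc : s + (Finset.univ.filter (fun j => ¬ j ∈ S)).card = a := by
    have := Finset.card_filter_add_card_filter_not
      (s := (Finset.univ : Finset (Fin a))) (p := fun j => j ∈ S)
    rw [Finset.filter_mem_eq_inter, Finset.univ_inter, Finset.card_univ, Fintype.card_fin]
      at this
    exact this
  rw [hsplit]
  set c := (Finset.univ.filter (fun j => ¬ j ∈ S)).card
  have ha2 : 2 * a * s = 2 * (s + c) * s := by rw [hc]
  rw [ha2]
  exact le_of_eq (by ring)

end S15

namespace S15

open Equiv Equiv.Perm Finset

variable {V : Type*} [Fintype V] [DecidableEq V] {A : V → V → Prop} [DecidableRel A]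
  {a : ℕ} {x y : Fin a → V}

theorem orbit_lower (st : Setup A a x y) (φ : Equiv.Perm (Fin a)) (S : Finset (Fin a))
    (hs2 : 2 ≤ S.card) :
    3 * a * S.card + 3 * a * S.card
      ≤ 2 * ∑ i ∈ S, (deg A (x i) + deg A (y (φ i))) := by
  have hx : 3 * a * S.card ≤ 2 * ∑ i ∈ S, deg A (x i) :=
    pair_lower S _ (fun i _ j _ hne => st.hdegX i j hne) hs2
  have hy : 3 * a * S.card ≤ 2 * ∑ i ∈ S, deg A (y (φ i)) :=
    pair_lower S _ (fun i _ j _ hne =>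
      st.hdegY (φ i) (φ j) (fun h => hne (φ.injective h))) hs2
  rw [Finset.sum_add_distrib]
  omega

theorem orbit_a_le (st : Setup A a x y) {φ ψ : Equiv.Perm (Fin a)}
    (hv : Valid A x y φ ψ)
    (hmax : ∀ φ' ψ', Valid A x y φ' ψ' → Ncnt (ψ' * φ') ≤ Ncnt (ψ * φ)) (i₀ : Fin a)
    (hs2 : 2 ≤ (Finset.univ.filter ((ψ * φ).SameCycle i₀)).card) :
    a ≤ 2 * (Finset.univ.filter ((ψ * φ).SameCycle i₀)).card := by
  set S := Finset.univ.filter ((ψ * φ).SameCycle i₀) with hS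
  set s := S.card with hs
  have hlow := orbit_lower st φ S hs2
  have hup := orbit_sum_le st hv hmax i₀
  rw [← hS, ← hs] at hup
  have hkey : 6 * a * s ≤ (4 * s + 4 * a) * s := by
    calc 6 * a * s = 3 * a * s + 3 * a * s := by ring
      _ ≤ 2 * ∑ i ∈ S, (deg A (x i) + deg A (y (φ i))) := hlow
      _ ≤ 2 * (2 * s * s + 2 * a * s) := by omega
      _ = (4 * s + 4 * a) * s := by ring
  have hs0 : 0 < s := by omega
  have := Nat.le_of_mul_le_mul_right
    (by calc (6 * a) * s = 6 * a * s := by ring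
          _ ≤ (4 * s + 4 * a) * s := hkey) hs0
  omega

theorem singleton_bound (st : Setup A a x y) {φ ψ : Equiv.Perm (Fin a)}
    (hv : Valid A x y φ ψ)
    (hmax : ∀ φ' ψ', Valid A x y φ' ψ' → Ncnt (ψ' * φ') ≤ Ncnt (ψ * φ)) {i₀ : Fin a}
    (h1 : (Finset.univ.filter ((ψ * φ).SameCycle i₀)).card = 1) :
    deg A (x i₀) + deg A (y (φ i₀)) ≤ 2 * a + 2 := by
  set S := Finset.univ.filter ((ψ * φ).SameCycle i₀) with hS
  have hmem : i₀ ∈ S := by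
    simp [hS, Equiv.Perm.SameCycle.refl]
  have hsingle : S = {i₀} := by
    obtain ⟨b, hb⟩ := Finset.card_eq_one.1 h1
    rw [hb] at hmem ⊢
    simp only [Finset.mem_singleton] at hmem
    rw [hmem]
  have := orbit_sum_le st hv hmax i₀
  rw [← hS, hsingle, Finset.sum_singleton, Finset.card_singleton] at this
  omega

theorem orbit_complete (st : Setup A a x y) {φ ψ : Equiv.Perm (Fin a)}
    (hv : Valid A x y φ ψ)
    (hmax : ∀ φ' ψ', Valid A x y φ' ψ' → Ncnt (ψ' * φ') ≤ Ncnt (ψ * φ)) (i₀ : Fin a)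
    (hs2 : 2 ≤ (Finset.univ.filter ((ψ * φ).SameCycle i₀)).card)
    (haS : a = 2 * (Finset.univ.filter ((ψ * φ).SameCycle i₀)).card) :
    ∀ i ∈ Finset.univ.filter ((ψ * φ).SameCycle i₀),
      ∀ j ∈ Finset.univ.filter ((ψ * φ).SameCycle i₀),
        A (x i) (y (φ j)) ∧ A (y (φ j)) (x i) := by
  set π := ψ * φ with hπ
  set S := Finset.univ.filter (π.SameCycle i₀) with hS
  set s := S.card with hs
  -- total sum equals the bound
  have hdec : ∑ i ∈ S, (deg A (x i) + deg A (y (φ i)))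
      = ∑ j : Fin a, ∑ i ∈ S, Find A x y φ π i j := by
    rw [← Finset.sum_comm]
    exact Finset.sum_congr rfl fun i _ => deg_decomp st φ π i
  have hlow := orbit_lower st φ S hs2
  have hBsum : ∑ j : Fin a, (if j ∈ S then 4 * s else 2 * s) = 2 * s * s + 2 * a * s := by
    rw [Finset.sum_ite, Finset.sum_const, Finset.sum_const, smul_eq_mul, smul_eq_mul,
      Finset.filter_mem_eq_inter, Finset.univ_inter, ← hs]
    have hc : s + (Finset.univ.filter (fun j => ¬ j ∈ S)).card = a := by
      have := Finset.card_filter_add_card_filter_not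
        (s := (Finset.univ : Finset (Fin a))) (p := fun j => j ∈ S)
      rw [Finset.filter_mem_eq_inter, Finset.univ_inter, Finset.card_univ,
        Fintype.card_fin] at this
      exact this
    set c := (Finset.univ.filter (fun j => ¬ j ∈ S)).card
    have ha2 : 2 * a * s = 2 * (s + c) * s := by rw [hc]
    rw [ha2]
    ring
  have hup : ∑ j : Fin a, ∑ i ∈ S, Find A x y φ π i j
      ≤ ∑ j : Fin a, (if j ∈ S then 4 * s else 2 * s) :=
    Finset.sum_le_sum fun j _ => Tj_le st hv hmax i₀ j
  have hlow2 : 2 * (2 * s * s + 2 * a * s) ≤ 2 * ∑ j : Fin a, ∑ i ∈ S, Find A x y φ π i j := by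
    rw [← hdec]
    calc 2 * (2 * s * s + 2 * a * s) = 3 * a * s + 3 * a * s := by
          rw [haS]; ring
      _ ≤ _ := hlow
  have heq : ∑ j : Fin a, ∑ i ∈ S, Find A x y φ π i j
      = ∑ j : Fin a, (if j ∈ S then 4 * s else 2 * s) := by
    rw [hBsum]; omega
  have hall := (Finset.sum_eq_sum_iff_of_le (fun j _ => Tj_le st hv hmax i₀ j)).1 heq
  intro i hi j hj
  have hTj : ∑ i ∈ S, Find A x y φ π i j = 4 * s := by
    have := hall j (Finset.mem_univ j)
    rwa [if_pos hj] at this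
  -- split into four sums
  have hsplit : ∑ i ∈ S, Find A x y φ π i j
      = (∑ i ∈ S, (if A (x i) (y (φ j)) then 1 else 0))
      + (∑ i ∈ S, (if A (y (φ j)) (x i) then 1 else 0))
      + ((∑ i ∈ S, (if A (y (φ i)) (x (π j)) then 1 else 0))
      + (∑ i ∈ S, (if A (x j) (y (φ i)) then 1 else 0))) := by
    unfold Find
    rw [Finset.sum_add_distrib, Finset.sum_add_distrib, Finset.sum_add_distrib]
  have c1 : ∀ (p : Fin a → Prop) [DecidablePred p],
      (∑ i ∈ S, (if p i then 1 else 0)) ≤ s := by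
    intro p _
    calc ∑ i ∈ S, (if p i then 1 else 0) ≤ S.card • 1 :=
          Finset.sum_le_card_nsmul _ _ _ (fun i _ => by split_ifs <;> omega)
      _ = s := by simp [hs]
  have h1 : ∑ i ∈ S, (if A (x i) (y (φ j)) then 1 else 0) = s := by
    have := c1 (fun i => A (x i) (y (φ j)))
    have := c1 (fun i => A (y (φ j)) (x i))
    have := c1 (fun i => A (y (φ i)) (x (π j)))
    have := c1 (fun i => A (x j) (y (φ i)))
    omega
  have h2 : ∑ i ∈ S, (if A (y (φ j)) (x i) then 1 else 0) = s := by
    have := c1 (fun i => A (x i) (y (φ j)))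
    have := c1 (fun i => A (y (φ j)) (x i))
    have := c1 (fun i => A (y (φ i)) (x (π j)))
    have := c1 (fun i => A (x j) (y (φ i)))
    omega
  constructor
  · have hfe : S.filter (fun i => A (x i) (y (φ j))) = S := by
      have hcf : (S.filter (fun i => A (x i) (y (φ j)))).card
          = ∑ i ∈ S, (if A (x i) (y (φ j)) then 1 else 0) := Finset.card_filter _ _
      apply Finset.eq_of_subset_of_card_le (Finset.filter_subset _ _)
      omega
    have : i ∈ S.filter (fun i => A (x i) (y (φ j))) := hfe.symm ▸ hi
    exact (Finset.mem_filter.1 this).2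
  · have hfe : S.filter (fun i => A (y (φ j)) (x i)) = S := by
      have hcf : (S.filter (fun i => A (y (φ j)) (x i))).card
          = ∑ i ∈ S, (if A (y (φ j)) (x i) then 1 else 0) := Finset.card_filter _ _
      apply Finset.eq_of_subset_of_card_le (Finset.filter_subset _ _)
      omega
    have : i ∈ S.filter (fun i => A (y (φ j)) (x i)) := hfe.symm ▸ hi
    exact (Finset.mem_filter.1 this).2

end S15

namespace S15

open Equiv Equiv.Perm Finset

variable {V : Type*} [Fintype V] [DecidableEq V] {A : V → V → Prop} [DecidableRel A]
  {a : ℕ} {x y : Fin a → V}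

theorem hasCycle_of_seq (hxy : ∀ i j, x i ≠ y j) (hxinj : Function.Injective x)
    (hyinj : Function.Injective y) (ha : 0 < a)
    (F G : ZMod a → Fin a) (hF : Function.Injective F) (hG : Function.Injective G)
    (h1 : ∀ k, A (x (F k)) (y (G k))) (h2 : ∀ k, A (y (G k)) (x (F (k + 1)))) :
    HasCycle A (2 * a) := by
  haveI : NeZero a := ⟨by omega⟩
  haveI : NeZero (2 * a) := ⟨by omega⟩
  haveI : Fact (1 < 2 * a) := ⟨by omega⟩
  refine ⟨by omega, ?_⟩
  refine ⟨fun w => if 2 ∣ (w : ZMod (2 * a)).val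
    then x (F ((w.val / 2 : ℕ) : ZMod a)) else y (G ((w.val / 2 : ℕ) : ZMod a)), ?_, ?_⟩
  · -- injectivity
    intro w w' h
    dsimp only at h
    have hv : (w : ZMod (2*a)).val < 2 * a := ZMod.val_lt w
    have hv' : (w' : ZMod (2*a)).val < 2 * a := ZMod.val_lt w'
    have hlt : w.val / 2 < a := by omega
    have hlt' : w'.val / 2 < a := by omega
    have hcast : ∀ {m m' : ℕ}, m < a → m' < a → ((m : ZMod a) = (m' : ZMod a)) → m = m' := by
      intro m m' hm hm' he
      have := congrArg ZMod.val he
      rwa [ZMod.val_cast_of_lt hm, ZMod.val_cast_of_lt hm'] at this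
    have hval : w.val = w'.val → w = w' := by
      intro he
      have : ((w.val : ℕ) : ZMod (2*a)) = ((w'.val : ℕ) : ZMod (2*a)) := by rw [he]
      rwa [ZMod.natCast_val, ZMod.natCast_val, ZMod.cast_id, ZMod.cast_id] at this
    by_cases hw : 2 ∣ w.val <;> by_cases hw' : 2 ∣ w'.val
    · rw [if_pos hw, if_pos hw'] at h
      have := hcast hlt hlt' (hF (hxinj h))
      apply hval; omega
    · rw [if_pos hw, if_neg hw'] at h
      exact absurd h (hxy _ _)
    · rw [if_neg hw, if_pos hw'] at h
      exact absurd h.symm (hxy _ _)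
    · rw [if_neg hw, if_neg hw'] at h
      have := hcast hlt hlt' (hG (hyinj h))
      apply hval; omega
  · -- arcs
    intro w
    dsimp only
    have hv : (w : ZMod (2*a)).val < 2 * a := ZMod.val_lt w
    have hw1 : (w + 1).val = (w.val + 1) % (2 * a) := by
      rw [ZMod.val_add, ZMod.val_one]
    by_cases hlast : w.val = 2 * a - 1
    · -- wrap-around; w.val is odd since 2a-1 is odd
      have hodd : ¬ 2 ∣ w.val := by omega
      have hw1' : (w + 1).val = 0 := by
        rw [hw1]
        have h2a : w.val + 1 = 2 * a := by omega
        rw [h2a, Nat.mod_self]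
      have hdiv : w.val / 2 = a - 1 := by omega
      rw [if_neg hodd, if_pos (by rw [hw1']; exact ⟨0, rfl⟩), hw1', hdiv]
      have hsucc : ((a - 1 : ℕ) : ZMod a) + 1 = ((0 : ℕ) : ZMod a) := by
        have e1 : ((a - 1 : ℕ) : ZMod a) + 1 = ((a - 1 + 1 : ℕ) : ZMod a) := by push_cast; ring
        rw [e1]
        have e2 : a - 1 + 1 = a := by omega
        rw [e2]
        simp
      have := h2 ((a - 1 : ℕ) : ZMod a)
      rw [hsucc] at this
      simpa using this
    · have hw1' : (w + 1).val = w.val + 1 := by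
        rw [hw1, Nat.mod_eq_of_lt (by omega)]
      by_cases hpar : 2 ∣ w.val
      · have hdiv : (w.val + 1) / 2 = w.val / 2 := by omega
        rw [if_pos hpar, hw1', if_neg (by omega), hdiv]
        exact h1 _
      · have hdiv : (w.val + 1) / 2 = w.val / 2 + 1 := by omega
        rw [if_neg hpar, hw1', if_pos (by omega), hdiv]
        have hcast2 : ((w.val / 2 + 1 : ℕ) : ZMod a) = ((w.val / 2 : ℕ) : ZMod a) + 1 := by
          push_cast; ring
        rw [hcast2]
        exact h2 _

theorem hasCycle_flip {k : ℕ} (h : HasCycle (fun u v => A v u) k) : HasCycle A k := by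
  obtain ⟨hk, f, hinj, harc⟩ := h
  refine ⟨hk, fun w => f (-w), fun w w' hww => ?_, fun w => ?_⟩
  · dsimp only at hww
    exact neg_injective (hinj hww)
  · dsimp only
    have := harc (-(w+1))
    dsimp only at this
    have e : -(w+1) + 1 = -w := by ring
    rw [e] at this
    exact this

end S15

namespace S15

open Equiv Equiv.Perm Finset

variable {a : ℕ}

theorem zmod_val_inj [NeZero a] {z z' : ZMod a} (h : z.val = z'.val) : z = z' := by
  have h2 : ((z.val : ℕ) : ZMod a) = ((z'.val : ℕ) : ZMod a) := by rw [h]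
  rwa [ZMod.natCast_val, ZMod.natCast_val, ZMod.cast_id, ZMod.cast_id] at h2

theorem exists_enum_last {γ : Type*} [DecidableEq γ] (S : Finset γ) {s0 : γ} (h : s0 ∈ S) :
    ∃ e : ℕ → γ, (∀ k k', k < S.card → k' < S.card → e k = e k' → k = k') ∧
      (∀ k, k < S.card → e k ∈ S) ∧ (∀ v ∈ S, ∃ k, k < S.card ∧ e k = v)
      ∧ e (S.card - 1) = s0 := by
  have hpos : 0 < S.card := Finset.card_pos.2 ⟨s0, h⟩
  set q := S.equivFin with hq
  set idx := q ⟨s0, h⟩ with hidx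
  set last : Fin S.card := ⟨S.card - 1, by omega⟩ with hlast
  set e0 : Fin S.card → γ := fun k => (q.symm (Equiv.swap idx last k) : γ) with he0
  have he0inj : Function.Injective e0 := by
    intro k k' hkk
    have := q.symm.injective (Subtype.ext hkk)
    exact (Equiv.swap idx last).injective this
  have he0mem : ∀ k, e0 k ∈ S := fun k => (q.symm _).2
  refine ⟨fun k => if hk : k < S.card then e0 ⟨k, hk⟩ else s0, ?_, ?_, ?_, ?_⟩
  · intro k k' hk hk' he
    dsimp only at he
    rw [dif_pos hk, dif_pos hk'] at he
    exact Fin.mk_eq_mk.1 (he0inj he)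
  · intro k hk
    dsimp only
    rw [dif_pos hk]
    exact he0mem _
  · intro v hv
    set k := Equiv.swap idx last (q ⟨v, hv⟩) with hk
    refine ⟨k.1, k.2, ?_⟩
    dsimp only
    rw [dif_pos k.2]
    have : (⟨k.1, k.2⟩ : Fin S.card) = k := rfl
    rw [this, hk, he0]
    dsimp only
    rw [Equiv.swap_apply_self]
    simp
  · dsimp only
    rw [dif_pos (by omega : S.card - 1 < S.card)]
    have : (⟨S.card - 1, by omega⟩ : Fin S.card) = last := rfl
    rw [this, he0]
    dsimp only
    rw [Equiv.swap_apply_right, hidx]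
    simp

theorem exists_cycle_enum (π : Equiv.Perm (Fin a)) (ha : 2 ≤ a)
    (hall : ∀ u v : Fin a, π.SameCycle u v) :
    ∃ F : ZMod a → Fin a, Function.Injective F ∧ ∀ k, F (k + 1) = π (F k) := by
  haveI : NeZero a := ⟨by omega⟩
  haveI : Fact (1 < a) := ⟨by omega⟩
  set i₀ : Fin a := ⟨0, by omega⟩ with hi₀
  have hinjn : ∀ k k' : ℕ, k < a → k' < a → (π^k) i₀ = (π^k') i₀ → k = k' := by
    suffices hs : ∀ k k', k ≤ k' → k' < a → (π^k) i₀ = (π^k') i₀ → k = k' by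
      intro k k' hk hk' he
      rcases le_total k k' with h1 | h1
      · exact hs k k' h1 hk' he
      · exact (hs k' k h1 hk he.symm).symm
    intro k k' hkk hk' he
    by_contra hne
    have hd : 0 < k' - k := by omega
    set d := k' - k with hdd
    set w := (π^k) i₀ with hw
    have hfix : (π^d) w = w := by
      rw [hw, ← Equiv.Perm.mul_apply, ← pow_add]
      have hdk : d + k = k' := by omega
      rw [hdk, ← he]
    have hper : ∀ s : ℕ, ((π^d)^s) w = w := by
      intro s
      induction s with
      | zero => simp
      | succ s ih => rw [pow_succ, Equiv.Perm.mul_apply, hfix, ih]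
    have hcover : ∀ v : Fin a, ∃ t, t < d ∧ (π^t) w = v := by
      intro v
      obtain ⟨t, _, ht⟩ := (hall w v).exists_pow_eq'
      refine ⟨t % d, Nat.mod_lt _ hd, ?_⟩
      calc (π^(t % d)) w = (π^(t % d)) (((π^d)^(t/d)) w) := by rw [hper]
        _ = ((π^(t % d)) * ((π^d)^(t/d))) w := by rw [Equiv.Perm.mul_apply]
        _ = (π^(t % d + d * (t/d))) w := by rw [← pow_mul, ← pow_add]
        _ = (π^t) w := by rw [Nat.mod_add_div]
        _ = v := ht
    have hsub : (Finset.univ : Finset (Fin a))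
        ⊆ (Finset.range d).image (fun t => (π^t) w) := by
      intro v _
      obtain ⟨t, htd, hte⟩ := hcover v
      exact Finset.mem_image.2 ⟨t, Finset.mem_range.2 htd, hte⟩
    have hcard := Finset.card_le_card hsub
    rw [Finset.card_univ, Fintype.card_fin] at hcard
    have hcard2 : ((Finset.range d).image (fun t => (π^t) w)).card ≤ d := by
      calc _ ≤ (Finset.range d).card := Finset.card_image_le
        _ = d := Finset.card_range d
    omega
  have himg : (Finset.range a).image (fun t => (π^t) i₀) = Finset.univ := by
    apply Finset.eq_univ_of_card
    rw [Finset.card_image_of_injOn, Finset.card_range]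
    · rw [Fintype.card_fin]
    · intro k hk k' hk' he
      exact hinjn k k' (Finset.mem_range.1 hk) (Finset.mem_range.1 hk') he
  have hpa : (π^a) i₀ = i₀ := by
    have hmem : (π^a) i₀ ∈ Finset.univ := Finset.mem_univ _
    rw [← himg] at hmem
    obtain ⟨t, ht, hte⟩ := Finset.mem_image.1 hmem
    rw [Finset.mem_range] at ht
    rcases Nat.eq_zero_or_pos t with h0 | h0
    · subst h0
      simpa using hte.symm
    · exfalso
      have he2 : (π^(a - t)) i₀ = i₀ := by
        have hstep : (π^t) ((π^(a-t)) i₀) = (π^t) i₀ := by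
          rw [← Equiv.Perm.mul_apply, ← pow_add]
          have : t + (a - t) = a := by omega
          rw [this, ← hte]
        exact (Equiv.injective _) hstep
      have := hinjn (a - t) 0 (by omega) (by omega) (by simpa using he2)
      omega
  refine ⟨fun z => (π^(z.val)) i₀, ?_, ?_⟩
  · intro z z' he
    exact zmod_val_inj (hinjn z.val z'.val (ZMod.val_lt z) (ZMod.val_lt z') he)
  · intro k
    have hk1 : (k+1).val = (k.val + 1) % a := by rw [ZMod.val_add, ZMod.val_one]
    show (π^((k+1).val)) i₀ = π ((π^(k.val)) i₀)
    have hr : π ((π^(k.val)) i₀) = (π^(k.val + 1)) i₀ := by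
      rw [pow_succ', Equiv.Perm.mul_apply]
    rw [hr]
    by_cases hl : k.val + 1 < a
    · rw [hk1, Nat.mod_eq_of_lt hl]
    · have hv := ZMod.val_lt k
      have hee : k.val + 1 = a := by omega
      have hpa2 : (π ^ (k.val + 1)) i₀ = i₀ := by rw [hee]; exact hpa
      rw [hpa2, hk1, hee, Nat.mod_self, pow_zero, Equiv.Perm.one_apply]

end S15

namespace S15

open Equiv Equiv.Perm Finset

variable {V : Type*} [Fintype V] [DecidableEq V] {A : V → V → Prop} [DecidableRel A]
  {a : ℕ} {x y : Fin a → V}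

theorem construct_cross (hxy : ∀ i j, x i ≠ y j) (hxinj : Function.Injective x)
    (hyinj : Function.Injective y)
    (U U' : Finset (Fin a)) (hcard : U.card = U'.card)
    (hcomp1 : ∀ i ∈ U, ∀ m ∈ U', A (x i) (y m) ∧ A (y m) (x i))
    (hcomp2 : ∀ i, i ∉ U → ∀ m, m ∉ U' → A (x i) (y m) ∧ A (y m) (x i))
    {i1 m1 j2 m2 : Fin a} (hi1 : i1 ∈ U) (hm1 : m1 ∉ U') (hc1 : A (x i1) (y m1))
    (hj2 : j2 ∉ U) (hm2 : m2 ∈ U') (hc2 : A (x j2) (y m2)) :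
    HasCycle A (2 * a) := by
  classical
  set h1 := U.card with hh1
  have hcU : U.card + Uᶜ.card = a := by
    have := Finset.card_add_card_compl U
    rwa [Fintype.card_fin] at this
  have hcU' : U'.card + U'ᶜ.card = a := by
    have := Finset.card_add_card_compl U'
    rwa [Fintype.card_fin] at this
  have hj2c : j2 ∈ Uᶜ := Finset.mem_compl.2 hj2
  have hm1c : m1 ∈ U'ᶜ := Finset.mem_compl.2 hm1
  have h1pos : 0 < h1 := Finset.card_pos.2 ⟨i1, hi1⟩
  have hWpos : 0 < Uᶜ.card := Finset.card_pos.2 ⟨j2, hj2c⟩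
  have hWcard : Uᶜ.card = a - h1 := by omega
  have hW'card : U'ᶜ.card = a - h1 := by omega
  have h1a : h1 < a := by omega
  have ha2 : 2 ≤ a := by omega
  haveI : NeZero a := ⟨by omega⟩
  haveI : Fact (1 < a) := ⟨by omega⟩
  obtain ⟨eU, heUinj, heUmem, _, heUlast⟩ := exists_enum_last U hi1
  obtain ⟨eW, heWinj, heWmem, _, heWlast⟩ := exists_enum_last Uᶜ hj2c
  obtain ⟨fU, hfUinj, hfUmem, _, hfUlast⟩ := exists_enum_last U' hm2
  obtain ⟨fW, hfWinj, hfWmem, _, hfWlast⟩ := exists_enum_last U'ᶜ hm1c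
  rw [← hh1] at heUinj heUmem heUlast
  rw [hWcard] at heWinj heWmem heWlast
  have hfc : U'.card = h1 := hcard.symm
  rw [hfc] at hfUinj hfUmem hfUlast
  rw [hW'card] at hfWinj hfWmem hfWlast
  set F : ZMod a → Fin a := fun z =>
    if z.val < h1 then eU z.val else eW (z.val - h1) with hF
  set G : ZMod a → Fin a := fun z =>
    if z.val + 1 < h1 then fU z.val
    else if z.val + 1 = h1 then m1
    else if z.val + 1 < a then fW (z.val - h1)
    else m2 with hG
  have hFval : ∀ w : ZMod a, (w.val < h1 ∧ F w = eU w.val)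
      ∨ (h1 ≤ w.val ∧ F w = eW (w.val - h1)) := by
    intro w
    rw [hF]; dsimp only
    by_cases hw : w.val < h1
    · left; exact ⟨hw, by rw [if_pos hw]⟩
    · right; exact ⟨by omega, by rw [if_neg hw]⟩
  have hcls : ∀ w : ZMod a, (w.val + 1 < h1 ∧ G w = fU w.val)
      ∨ (w.val + 1 = h1 ∧ G w = m1)
      ∨ (h1 ≤ w.val ∧ w.val + 1 < a ∧ G w = fW (w.val - h1))
      ∨ (w.val + 1 = a ∧ G w = m2) := by
    intro w
    have hvw := ZMod.val_lt w
    rw [hG]; dsimp only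
    by_cases c1 : w.val + 1 < h1
    · left; exact ⟨c1, by rw [if_pos c1]⟩
    · by_cases c2 : w.val + 1 = h1
      · right; left; exact ⟨c2, by rw [if_neg c1, if_pos c2]⟩
      · by_cases c3 : w.val + 1 < a
        · right; right; left
          exact ⟨by omega, c3, by rw [if_neg c1, if_neg c2, if_pos c3]⟩
        · right; right; right
          exact ⟨by omega, by rw [if_neg c1, if_neg c2, if_neg c3]⟩
  have hUc : ∀ {v w : Fin a}, v ∈ U' → w ∈ U'ᶜ → v = w → False :=
    fun hv hw he => (Finset.mem_compl.1 hw) (he ▸ hv)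
  have hfUne : ∀ k, k + 1 < h1 → fU k ≠ m2 := by
    intro k hk hek
    rw [← hfUlast] at hek
    have := hfUinj _ _ (by omega) (by omega) hek
    omega
  have hfWne : ∀ k, k < a - h1 - 1 → fW k ≠ m1 := by
    intro k hk hek
    rw [← hfWlast] at hek
    have := hfWinj _ _ (by omega) (by omega) hek
    omega
  have hFinj : Function.Injective F := by
    intro z z' he
    have hv := ZMod.val_lt z
    have hv' := ZMod.val_lt z'
    apply zmod_val_inj
    rcases hFval z with ⟨c1, e1⟩ | ⟨c1, e1⟩ <;> rcases hFval z' with ⟨c2, e2⟩ | ⟨c2, e2⟩ <;>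
      rw [e1, e2] at he
    · exact heUinj _ _ c1 c2 he
    · exact absurd (heUmem _ c1) (fun hh =>
        (Finset.mem_compl.1 (he ▸ heWmem (z'.val - h1) (by omega))) hh)
    · exact absurd (heUmem _ c2) (fun hh =>
        (Finset.mem_compl.1 (he ▸ heWmem (z.val - h1) (by omega))) hh)
    · have := heWinj _ _ (by omega) (by omega) he
      omega
  have hGinj : Function.Injective G := by
    intro z z' he
    have hv := ZMod.val_lt z
    have hv' := ZMod.val_lt z'
    apply zmod_val_inj
    rcases hcls z with ⟨c1, e1⟩ | ⟨c1, e1⟩ | ⟨c1, c1', e1⟩ | ⟨c1, e1⟩ <;>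
      rcases hcls z' with ⟨c2, e2⟩ | ⟨c2, e2⟩ | ⟨c2, c2', e2⟩ | ⟨c2, e2⟩ <;>
      rw [e1, e2] at he
    · exact hfUinj _ _ (by omega) (by omega) he
    · exact (hUc (hfUmem _ (by omega)) hm1c he).elim
    · exact (hUc (hfUmem _ (by omega)) (hfWmem _ (by omega)) he).elim
    · exact (hfUne _ c1 he).elim
    · exact (hUc (hfUmem _ (by omega)) hm1c he.symm).elim
    · omega
    · exact (hfWne _ (by omega) he.symm).elim
    · exact (hUc hm2 hm1c he.symm).elim
    · exact (hUc (hfUmem _ (by omega)) (hfWmem _ (by omega)) he.symm).elim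
    · exact (hfWne _ (by omega) he).elim
    · have := hfWinj _ _ (by omega) (by omega) he
      omega
    · exact (hUc hm2 (hfWmem _ (by omega)) he.symm).elim
    · exact (hfUne _ c2 he.symm).elim
    · exact (hUc hm2 hm1c he).elim
    · exact (hUc hm2 (hfWmem _ (by omega)) he).elim
    · omega
  apply hasCycle_of_seq hxy hxinj hyinj (by omega) F G hFinj hGinj
  · intro z
    have hv := ZMod.val_lt z
    rcases hcls z with ⟨c1, e1⟩ | ⟨c1, e1⟩ | ⟨c1, c1', e1⟩ | ⟨c1, e1⟩ <;> rw [e1]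
    · rcases hFval z with ⟨c2, e2⟩ | ⟨c2, e2⟩
      · rw [e2]
        exact (hcomp1 _ (heUmem _ c2) _ (hfUmem _ (by omega))).1
      · omega
    · rcases hFval z with ⟨c2, e2⟩ | ⟨c2, e2⟩
      · rw [e2]
        have : z.val = h1 - 1 := by omega
        rw [this, heUlast]
        exact hc1
      · omega
    · rcases hFval z with ⟨c2, e2⟩ | ⟨c2, e2⟩
      · omega
      · rw [e2]
        exact (hcomp2 _ (Finset.mem_compl.1 (heWmem _ (by omega)))
          _ (Finset.mem_compl.1 (hfWmem _ (by omega)))).1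
    · rcases hFval z with ⟨c2, e2⟩ | ⟨c2, e2⟩
      · omega
      · rw [e2]
        have : z.val - h1 = a - h1 - 1 := by omega
        rw [this, heWlast]
        exact hc2
  · intro z
    have hv := ZMod.val_lt z
    have hzp : (z + 1).val = (z.val + 1) % a := by rw [ZMod.val_add, ZMod.val_one]
    rcases hcls z with ⟨c1, e1⟩ | ⟨c1, e1⟩ | ⟨c1, c1', e1⟩ | ⟨c1, e1⟩ <;> rw [e1]
    · have hz1 : (z + 1).val = z.val + 1 := by rw [hzp, Nat.mod_eq_of_lt (by omega)]
      rcases hFval (z + 1) with ⟨c2, e2⟩ | ⟨c2, e2⟩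
      · rw [e2, hz1]
        exact (hcomp1 _ (heUmem _ (by omega)) _ (hfUmem _ (by omega))).2
      · omega
    · have hz1 : (z + 1).val = z.val + 1 := by rw [hzp, Nat.mod_eq_of_lt (by omega)]
      rcases hFval (z + 1) with ⟨c2, e2⟩ | ⟨c2, e2⟩
      · omega
      · rw [e2, hz1]
        exact (hcomp2 _ (Finset.mem_compl.1 (heWmem _ (by omega)))
          _ (Finset.mem_compl.1 hm1c)).2
    · have hz1 : (z + 1).val = z.val + 1 := by rw [hzp, Nat.mod_eq_of_lt (by omega)]
      rcases hFval (z + 1) with ⟨c2, e2⟩ | ⟨c2, e2⟩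
      · omega
      · rw [e2, hz1]
        exact (hcomp2 _ (Finset.mem_compl.1 (heWmem _ (by omega)))
          _ (Finset.mem_compl.1 (hfWmem _ (by omega)))).2
    · have hz1 : (z + 1).val = 0 := by
        rw [hzp, c1, Nat.mod_self]
      rcases hFval (z + 1) with ⟨c2, e2⟩ | ⟨c2, e2⟩
      · rw [e2, hz1]
        exact (hcomp1 _ (heUmem _ (by omega)) _ hm2).2
      · omega
end S15

namespace S15

open Equiv Equiv.Perm Finset

variable {V : Type*} [Fintype V] [DecidableEq V]

theorem hall_match (A : V → V → Prop) [DecidableRel A] {a : ℕ} (ha : 3 ≤ a)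
    (X Y : Finset V) (hcard : Fintype.card V = 2 * a) (hX : X.card = a) (hY : Y.card = a)
    (hbip : BipartiteWith A X Y) (hstrong : StrongConn A)
    (hdeg : ∀ u v : V, u ≠ v → ((u ∈ X ∧ v ∈ X) ∨ (u ∈ Y ∧ v ∈ Y)) →
      3 * a ≤ deg A u + deg A v)
    (x : Fin a → V) (hxinj : Function.Injective x) (hxX : ∀ i, x i ∈ X) :
    ∃ f : Fin a → V, Function.Injective f ∧ (∀ i, A (x i) (f i)) ∧ ∀ i, f i ∈ Y := by
  classical
  obtain ⟨hdisj, hunion, harc⟩ := hbip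
  set t : Fin a → Finset V := fun i => Finset.univ.filter (A (x i)) with ht
  have hxnotY : ∀ i, x i ∉ Y := fun i => Finset.disjoint_left.1 hdisj (hxX i)
  have htY : ∀ i, t i ⊆ Y := by
    intro i v hv
    rw [ht] at hv
    simp only [Finset.mem_filter, Finset.mem_univ, true_and] at hv
    rcases harc _ _ hv with ⟨_, h2⟩ | ⟨h1, _⟩
    · exact h2
    · exact absurd h1 (hxnotY i)
  have hinY : ∀ {w : V}, w ∈ Y → (Finset.univ.filter (A · w)) ⊆ X := by
    intro w hw u hu
    simp only [Finset.mem_filter, Finset.mem_univ, true_and] at hu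
    rcases harc _ _ hu with ⟨h1, _⟩ | ⟨_, h2⟩
    · exact h1
    · exact absurd h2 (Finset.disjoint_right.1 hdisj hw)
  have houtY : ∀ {w : V}, w ∈ Y → outDeg A w ≤ a := by
    intro w hw
    have : (Finset.univ.filter (A w)) ⊆ X := by
      intro u hu
      simp only [Finset.mem_filter, Finset.mem_univ, true_and] at hu
      rcases harc _ _ hu with ⟨h1, _⟩ | ⟨_, h2⟩
      · exact absurd h1 (Finset.disjoint_right.1 hdisj hw)
      · exact h2
    calc outDeg A w ≤ X.card := Finset.card_le_card this
      _ = a := hX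
  have hinX : ∀ i : Fin a, inDeg A (x i) ≤ a := by
    intro i
    have : (Finset.univ.filter (A · (x i))) ⊆ Y := by
      intro u hu
      simp only [Finset.mem_filter, Finset.mem_univ, true_and] at hu
      rcases harc _ _ hu with ⟨_, h2⟩ | ⟨h1, _⟩
      · exact absurd h2 (Finset.disjoint_left.1 hdisj (hxX i))
      · exact h1
    calc inDeg A (x i) ≤ Y.card := Finset.card_le_card this
      _ = a := hY
  have hhall : ∀ S : Finset (Fin a), S.card ≤ (S.biUnion t).card := by
    intro S
    by_contra hlt
    push_neg at hlt
    set N := S.biUnion t with hN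
    have hNY : N ⊆ Y := by
      intro v hv
      obtain ⟨i, _, hvi⟩ := Finset.mem_biUnion.1 hv
      exact htY i hvi
    have hNcard : N.card ≤ a := le_trans (Finset.card_le_card hNY) (le_of_eq hY)
    rcases Nat.lt_or_ge S.card 2 with hS1 | hS2
    · -- S.card = 1, N empty
      have hS : S.card = 1 := by omega
      obtain ⟨i, hi⟩ := Finset.card_eq_one.1 hS
      have hNe : N.card = 0 := by omega
      obtain ⟨v, hv⟩ := Fintype.exists_ne_of_one_lt_card (by omega) (x i)
      rcases Relation.ReflTransGen.cases_head (hstrong (x i) v) with he | ⟨w, hw, _⟩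
      · exact hv he.symm
      · have : w ∈ N := by
          rw [hN, hi]
          apply Finset.mem_biUnion.2 ⟨i, Finset.mem_singleton_self i, ?_⟩
          rw [ht]
          simp [hw]
        rw [Finset.card_eq_zero.1 hNe] at this
        exact absurd this (Finset.notMem_empty w)
    · -- two elements of S
      obtain ⟨i, hi, i', hi', hii⟩ := Finset.one_lt_card.1 hS2
      have hout : ∀ j ∈ S, outDeg A (x j) ≤ N.card := by
        intro j hj
        apply Finset.card_le_card
        intro v hv
        exact Finset.mem_biUnion.2 ⟨j, hj, hv⟩
      have hd := hdeg (x i) (x i') (fun h => hii (hxinj h)) (Or.inl ⟨hxX i, hxX i'⟩)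
      have haN : a ≤ 2 * N.card := by
        have h1 := hout i hi
        have h2 := hout i' hi'
        have h3 := hinX i
        have h4 := hinX i'
        unfold deg at hd
        omega
      have hYNcard : (Y \ N).card = a - N.card := by
        rw [Finset.card_sdiff_of_subset hNY, hY]
      rcases Nat.lt_or_ge (a - N.card) 2 with hsmall | hbig
      · -- N.card = a - 1, S.card = a, missing vertex unreachable
        have hSa : S.card ≤ a := by
          calc S.card ≤ (Finset.univ : Finset (Fin a)).card := Finset.card_le_card
                (Finset.subset_univ S)
            _ = a := by rw [Finset.card_univ, Fintype.card_fin]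
        have hNa : N.card = a - 1 := by omega
        have hSua : S.card = a := by omega
        have hSu : S = Finset.univ := by
          apply Finset.eq_univ_of_card
          rw [hSua, Fintype.card_fin]
        have hYN1 : (Y \ N).card = 1 := by omega
        obtain ⟨w, hw⟩ := Finset.card_eq_one.1 hYN1
        have hwY : w ∈ Y := by
          have : w ∈ Y \ N := by rw [hw]; exact Finset.mem_singleton_self w
          exact (Finset.mem_sdiff.1 this).1
        have hwN : w ∉ N := by
          have : w ∈ Y \ N := by rw [hw]; exact Finset.mem_singleton_self w
          exact (Finset.mem_sdiff.1 this).2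
        have hXim : Finset.univ.image x = X := by
          apply Finset.eq_of_subset_of_card_le
          · intro u hu
            obtain ⟨i, _, rfl⟩ := Finset.mem_image.1 hu
            exact hxX i
          · rw [Finset.card_image_of_injective _ hxinj, Finset.card_univ, Fintype.card_fin,
              hX]
        have hinw : ∀ u : V, ¬ A u w := by
          intro u hu
          have huX : u ∈ X := hinY hwY (by simp [hu])
          rw [← hXim] at huX
          obtain ⟨j, _, rfl⟩ := Finset.mem_image.1 huX
          apply hwN
          apply Finset.mem_biUnion.2 ⟨j, by rw [hSu]; exact Finset.mem_univ j, ?_⟩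
          rw [ht]
          simp [hu]
        obtain ⟨v, hv⟩ := Fintype.exists_ne_of_one_lt_card (by omega) w
        rcases Relation.ReflTransGen.cases_tail (hstrong v w) with he | ⟨c, _, hc⟩
        · exact hv he.symm
        · exact hinw c hc
      · -- two elements of Y \ N
        obtain ⟨w, hwm, w', hwm', hww⟩ := Finset.one_lt_card.1 (by omega : 1 < (Y \ N).card)
        have hwY := (Finset.mem_sdiff.1 hwm).1
        have hwY' := (Finset.mem_sdiff.1 hwm').1
        have hwN := (Finset.mem_sdiff.1 hwm).2
        have hwN' := (Finset.mem_sdiff.1 hwm').2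
        have hindeg : ∀ {u : V}, u ∈ Y → u ∉ N → inDeg A u ≤ a - S.card := by
          intro u huY huN
          have hsub : (Finset.univ.filter (A · u)) ⊆ X \ (S.image x) := by
            intro v hv
            have hvX : v ∈ X := hinY huY hv
            simp only [Finset.mem_filter, Finset.mem_univ, true_and] at hv
            rw [Finset.mem_sdiff]
            refine ⟨hvX, fun hvim => ?_⟩
            obtain ⟨j, hj, rfl⟩ := Finset.mem_image.1 hvim
            apply huN
            apply Finset.mem_biUnion.2 ⟨j, hj, ?_⟩
            rw [ht]
            simp [hv]
          calc inDeg A u ≤ (X \ (S.image x)).card := Finset.card_le_card hsub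
            _ = a - S.card := by
              rw [Finset.card_sdiff_of_subset, hX, Finset.card_image_of_injective _ hxinj]
              intro v hvim
              obtain ⟨j, _, rfl⟩ := Finset.mem_image.1 hvim
              exact hxX j
        have hd2 := hdeg w w' hww (Or.inr ⟨hwY, hwY'⟩)
        have h1 := hindeg hwY hwN
        have h2 := hindeg hwY' hwN'
        have h3 := houtY hwY
        have h4 := houtY hwY'
        unfold deg at hd2
        have hSa : S.card ≤ a := by
          calc S.card ≤ (Finset.univ : Finset (Fin a)).card := Finset.card_le_card
                (Finset.subset_univ S)
            _ = a := by rw [Finset.card_univ, Fintype.card_fin]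
        omega
  obtain ⟨f, hfinj, hf⟩ := (Finset.all_card_le_biUnion_card_iff_exists_injective t).1 hhall
  refine ⟨f, hfinj, fun i => ?_, fun i => ?_⟩
  · have := hf i
    rw [ht] at this
    simpa using this
  · exact htY i (hf i)

end S15

namespace S15

open Equiv Equiv.Perm Finset

variable {V : Type*} [Fintype V] [DecidableEq V] {A : V → V → Prop} [DecidableRel A]
  {a : ℕ} {x y : Fin a → V}

theorem caseB (st : Setup A a x y) {φ ψ : Equiv.Perm (Fin a)} (hv : Valid A x y φ ψ)
    (hmax : ∀ φ' ψ', Valid A x y φ' ψ' → Ncnt (ψ' * φ') ≤ Ncnt (ψ * φ))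
    {i₀ : Fin a}
    (hsingle : (Finset.univ.filter ((ψ * φ).SameCycle i₀)).card = 1)
    (hone : ∀ u ∈ Finset.univ.erase i₀, ∀ v ∈ Finset.univ.erase i₀,
      (ψ * φ).SameCycle u v) :
    False := by
  classical
  set π := ψ * φ with hπ
  have ha := st.ha
  have horb : Finset.univ.filter (π.SameCycle i₀) = {i₀} := by
    obtain ⟨b, hb⟩ := Finset.card_eq_one.1 hsingle
    have hmem : i₀ ∈ Finset.univ.filter (π.SameCycle i₀) := by
      simp [Equiv.Perm.SameCycle.refl]
    rw [hb] at hmem ⊢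
    simp only [Finset.mem_singleton] at hmem
    rw [hmem]
  have hfix : π i₀ = i₀ := by
    have : π i₀ ∈ Finset.univ.filter (π.SameCycle i₀) := by
      simp only [Finset.mem_filter, Finset.mem_univ, true_and]
      exact Equiv.Perm.sameCycle_apply_right.2 (Equiv.Perm.SameCycle.refl _ _)
    rw [horb] at this
    simpa using this
  have hns : ∀ j, j ≠ i₀ → ¬ π.SameCycle i₀ j := by
    intro j hj hsc
    have : j ∈ Finset.univ.filter (π.SameCycle i₀) := by simp [hsc]
    rw [horb] at this
    exact hj (by simpa using this)
  set C := Finset.univ.erase i₀ with hC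
  set n := C.card with hn0
  have hn : n + 1 = a := by
    rw [hn0, hC, Finset.card_erase_of_mem (Finset.mem_univ i₀), Finset.card_univ,
      Fintype.card_fin]
    omega
  set P1 := C.filter (fun j => A (y (φ j)) (x i₀)) with hP1
  set P2 := C.filter (fun j => A (x i₀) (y (φ j))) with hP2
  set P3 := C.filter (fun j => A (x j) (y (φ i₀))) with hP3
  set P4 := C.filter (fun j => A (y (φ i₀)) (x j)) with hP4
  set r1 := P1.card
  set r2 := P2.card
  set r3 := P3.card
  set r4 := P4.card
  have hxy0 : A (x i₀) (y (φ i₀)) := hv.1 i₀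
  have hyx0 : A (y (φ i₀)) (x i₀) := by
    have := hv.2 (φ i₀)
    have he : ψ (φ i₀) = i₀ := by
      rw [← Equiv.Perm.mul_apply, ← hπ, hfix]
    rwa [he] at this
  have hinsert : insert i₀ C = Finset.univ := by
    rw [hC, Finset.insert_erase (Finset.mem_univ i₀)]
  have hiC : i₀ ∉ C := by simp [hC]
  -- degree identities
  have hcount : ∀ (p : Fin a → Prop) [DecidablePred p], p i₀ →
      (Finset.univ.filter p).card = 1 + (C.filter p).card := by
    intro p _ hp
    rw [← hinsert, Finset.filter_insert, if_pos hp,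
      Finset.card_insert_of_notMem (fun hmem => hiC (Finset.filter_subset _ _ hmem))]
    omega
  have hodx : outDeg A (x i₀) = 1 + r2 := by
    rw [st.outDeg_x, card_filter_perm φ (fun m => A (x i₀) (y m))]
    exact hcount (fun j => A (x i₀) (y (φ j))) hxy0
  have hidx : inDeg A (x i₀) = 1 + r1 := by
    rw [st.inDeg_x, card_filter_perm φ (fun m => A (y m) (x i₀))]
    exact hcount (fun j => A (y (φ j)) (x i₀)) hyx0
  have hody : outDeg A (y (φ i₀)) = 1 + r4 := by
    rw [st.outDeg_y]
    exact hcount (fun j => A (y (φ i₀)) (x j)) hyx0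
  have hidy : inDeg A (y (φ i₀)) = 1 + r3 := by
    rw [st.inDeg_y]
    exact hcount (fun j => A (x j) (y (φ i₀))) hxy0
  have hα : deg A (x i₀) = 2 + r1 + r2 := by unfold deg; omega
  have hβ : deg A (y (φ i₀)) = 2 + r3 + r4 := by unfold deg; omega
  -- C1/C2
  have hc1 : ∀ j ∈ C, ¬ (A (x i₀) (y (φ j)) ∧ A (x j) (y (φ i₀))) := by
    intro j hj
    exact maxC1 hv hmax (hns j (Finset.ne_of_mem_erase hj))
  have hc2 : ∀ j ∈ C, ¬ (A (y (φ i₀)) (x (π j)) ∧ A (y (φ j)) (x i₀)) := by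
    intro j hj
    have := maxC2 hv hmax (hns j (Finset.ne_of_mem_erase hj))
    rw [← hπ, hfix] at this
    exact this
  have hπC : ∀ j ∈ C, π j ∈ C := by
    intro j hj
    rw [hC, Finset.mem_erase]
    refine ⟨fun he => ?_, Finset.mem_univ _⟩
    have := π.injective (he.trans hfix.symm)
    exact Finset.ne_of_mem_erase hj this
  -- (D1)
  have hD1 : r2 + r3 ≤ n := by
    have hdisj : Disjoint P2 P3 := by
      rw [Finset.disjoint_left]
      intro j hj2 hj3
      exact hc1 j (Finset.filter_subset _ _ hj2)
        ⟨(Finset.mem_filter.1 hj2).2, (Finset.mem_filter.1 hj3).2⟩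
    calc r2 + r3 = (P2 ∪ P3).card := (Finset.card_union_of_disjoint hdisj).symm
      _ ≤ C.card := Finset.card_le_card (Finset.union_subset
          (Finset.filter_subset _ _) (Finset.filter_subset _ _))
  -- (D2)
  have hD2 : r1 + r4 ≤ n := by
    have himg : (P1.image π).card = r1 := Finset.card_image_of_injective _ π.injective
    have hdisj : Disjoint (P1.image π) P4 := by
      rw [Finset.disjoint_left]
      intro m hm1 hm4
      obtain ⟨j, hj, rfl⟩ := Finset.mem_image.1 hm1
      exact hc2 j (Finset.filter_subset _ _ hj)
        ⟨(Finset.mem_filter.1 hm4).2, (Finset.mem_filter.1 hj).2⟩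
    have hsub : (P1.image π) ∪ P4 ⊆ C := by
      apply Finset.union_subset
      · intro m hm
        obtain ⟨j, hj, rfl⟩ := Finset.mem_image.1 hm
        exact hπC j (Finset.filter_subset _ _ hj)
      · exact Finset.filter_subset _ _
    calc r1 + r4 = (P1.image π).card + r4 := by rw [himg]
      _ = ((P1.image π) ∪ P4).card := (Finset.card_union_of_disjoint hdisj).symm
      _ ≤ n := Finset.card_le_card hsub
  have hαβ : deg A (x i₀) + deg A (y (φ i₀)) ≤ 2 * a + 2 :=
    singleton_bound st hv hmax hsingle
  obtain ⟨j₁, hj₁⟩ := Finset.card_pos.1 (by omega : 0 < C.card)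
  have hj₁i : j₁ ≠ i₀ := Finset.ne_of_mem_erase hj₁
  have hαa : a ≤ deg A (x i₀) := by
    have h1 := st.hdegX i₀ j₁ (Ne.symm hj₁i)
    have h2 := st.deg_x_le j₁
    omega
  have hβa : a ≤ deg A (y (φ i₀)) := by
    have h1 := st.hdegY (φ i₀) (φ j₁) (fun he => hj₁i (φ.injective he).symm)
    have h2 := st.deg_y_le (φ j₁)
    omega
  -- case analysis on (deg x i₀, deg y (φ i₀))
  rcases Nat.lt_or_ge (deg A (x i₀)) (a + 1) with hA | hA'
  · -- deg x i₀ = a : all x j complete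
    have hful : ∀ j ∈ C, 2 * a ≤ deg A (x j) := by
      intro j hj
      have := st.hdegX i₀ j (Ne.symm (Finset.ne_of_mem_erase hj))
      omega
    have hr3 : P3 = C := by
      rw [hP3, Finset.filter_eq_self]
      intro j hj
      have hod : a ≤ outDeg A (x j) := by
        have h1 := st.inDeg_x_le j
        have h2 := hful j hj
        unfold deg at h2
        omega
      exact st.out_full_x hod (φ i₀)
    have hr4 : P4 = C := by
      rw [hP4, Finset.filter_eq_self]
      intro j hj
      have hid : a ≤ inDeg A (x j) := by
        have h1 := st.outDeg_x_le j
        have h2 := hful j hj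
        unfold deg at h2
        omega
      exact st.in_full_x hid (φ i₀)
    have h3e : r3 = n := congrArg Finset.card hr3
    have h4e : r4 = n := congrArg Finset.card hr4
    omega
  rcases Nat.lt_or_ge (deg A (y (φ i₀))) (a + 1) with hB | hB'
  · have hful : ∀ j ∈ C, 2 * a ≤ deg A (y (φ j)) := by
      intro j hj
      have := st.hdegY (φ i₀) (φ j)
        (fun he => (Finset.ne_of_mem_erase hj) (φ.injective he).symm)
      omega
    have hr1 : P1 = C := by
      rw [hP1, Finset.filter_eq_self]
      intro j hj
      have hod : a ≤ outDeg A (y (φ j)) := by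
        have h1 := st.inDeg_y_le (φ j)
        have h2 := hful j hj
        unfold deg at h2
        omega
      exact st.out_full_y hod i₀
    have hr2 : P2 = C := by
      rw [hP2, Finset.filter_eq_self]
      intro j hj
      have hid : a ≤ inDeg A (y (φ j)) := by
        have h1 := st.outDeg_y_le (φ j)
        have h2 := hful j hj
        unfold deg at h2
        omega
      exact st.in_full_y hid i₀
    have h1e : r1 = n := congrArg Finset.card hr1
    have h2e : r2 = n := congrArg Finset.card hr2
    omega
  -- now α = β = a + 1
  have hαe : deg A (x i₀) = a + 1 := by omega
  have hβe : deg A (y (φ i₀)) = a + 1 := by omega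
  have hr12 : r1 + r2 = n := by omega
  have hr34 : r3 + r4 = n := by omega
  have hr14 : r1 + r4 = n := by omega
  have hr23 : r2 + r3 = n := by omega
  -- budget facts
  have hbx : ∀ j ∈ C, 2 * a ≤ deg A (x j) + 1 := by
    intro j hj
    have := st.hdegX i₀ j (Ne.symm (Finset.ne_of_mem_erase hj))
    omega
  have hby : ∀ j ∈ C, 2 * a ≤ deg A (y (φ j)) + 1 := by
    intro j hj
    have := st.hdegY (φ i₀) (φ j)
      (fun he => (Finset.ne_of_mem_erase hj) (φ.injective he).symm)
    omega
  have hbudy : ∀ j ∈ C, j ∉ P1 → j ∈ P2 := by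
    intro j hj hj1
    have hnA : ¬ A (y (φ j)) (x i₀) := by
      intro hA2
      exact hj1 (Finset.mem_filter.2 ⟨hj, hA2⟩)
    rw [hP2, Finset.mem_filter]
    refine ⟨hj, ?_⟩
    by_contra hno
    have ho : outDeg A (y (φ j)) + 1 ≤ a := by
      rw [st.outDeg_y]
      have hsub : (Finset.univ.filter fun i => A (y (φ j)) (x i)) ⊆ Finset.univ.erase i₀ := by
        intro u hu
        rw [Finset.mem_erase]
        exact ⟨fun he => hnA (he ▸ (Finset.mem_filter.1 hu).2), Finset.mem_univ _⟩
      have := Finset.card_le_card hsub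
      rw [Finset.card_erase_of_mem (Finset.mem_univ i₀), Finset.card_univ,
        Fintype.card_fin] at this
      omega
    have hi : inDeg A (y (φ j)) + 1 ≤ a := by
      rw [st.inDeg_y]
      have hsub : (Finset.univ.filter fun i => A (x i) (y (φ j))) ⊆ Finset.univ.erase i₀ := by
        intro u hu
        rw [Finset.mem_erase]
        exact ⟨fun he => hno (he ▸ (Finset.mem_filter.1 hu).2), Finset.mem_univ _⟩
      have := Finset.card_le_card hsub
      rw [Finset.card_erase_of_mem (Finset.mem_univ i₀), Finset.card_univ,
        Fintype.card_fin] at this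
      omega
    have := hby j hj
    unfold deg at this
    omega
  have hbudx : ∀ j ∈ C, j ∉ P3 → j ∈ P4 := by
    intro j hj hj3
    have hnA : ¬ A (x j) (y (φ i₀)) := by
      intro hA2
      exact hj3 (Finset.mem_filter.2 ⟨hj, hA2⟩)
    rw [hP4, Finset.mem_filter]
    refine ⟨hj, ?_⟩
    by_contra hno
    have ho : outDeg A (x j) + 1 ≤ a := by
      rw [st.outDeg_x]
      have hsub : (Finset.univ.filter fun m => A (x j) (y m))
          ⊆ Finset.univ.erase (φ i₀) := by
        intro u hu
        rw [Finset.mem_erase]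
        exact ⟨fun he => hnA (he ▸ (Finset.mem_filter.1 hu).2), Finset.mem_univ _⟩
      have := Finset.card_le_card hsub
      rw [Finset.card_erase_of_mem (Finset.mem_univ _), Finset.card_univ,
        Fintype.card_fin] at this
      omega
    have hi : inDeg A (x j) + 1 ≤ a := by
      rw [st.inDeg_x]
      have hsub : (Finset.univ.filter fun m => A (y m) (x j))
          ⊆ Finset.univ.erase (φ i₀) := by
        intro u hu
        rw [Finset.mem_erase]
        exact ⟨fun he => hno (he ▸ (Finset.mem_filter.1 hu).2), Finset.mem_univ _⟩
      have := Finset.card_le_card hsub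
      rw [Finset.card_erase_of_mem (Finset.mem_univ _), Finset.card_univ,
        Fintype.card_fin] at this
      omega
    have := hbx j hj
    unfold deg at this
    omega
  have hP1C : P1 ⊆ C := Finset.filter_subset _ _
  have hP3C : P3 ⊆ C := Finset.filter_subset _ _
  have hP2e : C \ P1 = P2 := by
    apply Finset.eq_of_subset_of_card_le
    · intro j hj
      rw [Finset.mem_sdiff] at hj
      exact hbudy j hj.1 hj.2
    · rw [Finset.card_sdiff_of_subset hP1C]
      omega
  have hP4e : C \ P3 = P4 := by
    apply Finset.eq_of_subset_of_card_le
    · intro j hj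
      rw [Finset.mem_sdiff] at hj
      exact hbudx j hj.1 hj.2
    · rw [Finset.card_sdiff_of_subset hP3C]
      omega
  have hP31 : P3 = P1 := by
    apply Finset.eq_of_subset_of_card_le
    · intro j hj
      have hjC : j ∈ C := hP3C hj
      by_contra hj1
      have : j ∈ P2 := by
        rw [← hP2e, Finset.mem_sdiff]
        exact ⟨hjC, hj1⟩
      exact hc1 j hjC ⟨(Finset.mem_filter.1 this).2, (Finset.mem_filter.1 hj).2⟩
    · omega
  have hclosure : ∀ j ∈ P1, π j ∈ P1 := by
    intro j hj
    have hjC : j ∈ C := hP1C hj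
    have hπjC : π j ∈ C := hπC j hjC
    by_contra hno
    have h4 : π j ∈ P4 := by
      rw [← hP4e, hP31, Finset.mem_sdiff]
      exact ⟨hπjC, hno⟩
    exact hc2 j hjC ⟨(Finset.mem_filter.1 h4).2, (Finset.mem_filter.1 hj).2⟩
  -- r1 cannot be 0, n, or in between
  rcases Nat.eq_zero_or_pos r1 with hr10 | hr1pos
  · -- P1 = P3 = ∅ : pair unreachable
    have hP1em : P1 = ∅ := Finset.card_eq_zero.1 hr10
    have hP3em : P3 = ∅ := by rw [hP31, hP1em]
    have hreach : ∀ v, Relation.ReflTransGen A (x j₁) v → v ≠ x i₀ ∧ v ≠ y (φ i₀) := by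
      intro v h
      induction h with
      | refl =>
        constructor
        · exact fun he => hj₁i (st.hx he)
        · exact st.hxy j₁ (φ i₀)
      | tail hab hbc ih =>
        rename_i b c
        rcases st.hcover b with ⟨m, rfl⟩ | ⟨m, rfl⟩
        · obtain ⟨m', rfl⟩ := st.arc_x hbc
          constructor
          · exact fun he => st.hxy i₀ m' he.symm
          · intro he
            have hmi : m ≠ i₀ := fun hh => ih.1 (congrArg x hh)
            have hmC : m ∈ C := Finset.mem_erase.2 ⟨hmi, Finset.mem_univ _⟩
            have : m ∈ P3 := Finset.mem_filter.2 ⟨hmC, he ▸ hbc⟩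
            rw [hP3em] at this
            exact absurd this (Finset.notMem_empty m)
        · obtain ⟨m', rfl⟩ := st.arc_y hbc
          constructor
          · intro he
            have hmφ : m ≠ φ i₀ := fun hh => ih.2 (congrArg y hh)
            set j := φ.symm m with hj
            have hφj : φ j = m := φ.apply_symm_apply m
            have hji : j ≠ i₀ := by
              intro hh
              apply hmφ
              rw [← hφj, hh]
            have hjC : j ∈ C := Finset.mem_erase.2 ⟨hji, Finset.mem_univ _⟩
            have : j ∈ P1 := Finset.mem_filter.2 ⟨hjC, by rw [hφj]; exact he ▸ hbc⟩
            rw [hP1em] at this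
            exact absurd this (Finset.notMem_empty j)
          · exact fun he => st.hxy m' (φ i₀) he
    exact (hreach (x i₀) (st.hstrong _ _)).1 rfl
  rcases Nat.lt_or_ge r1 n with hr1n | hr1n
  · -- 0 < r1 < n : invariance contradiction
    obtain ⟨p, hp⟩ := Finset.card_pos.1 hr1pos
    have hCP1 : 0 < (C \ P1).card := by
      rw [Finset.card_sdiff_of_subset hP1C]
      omega
    obtain ⟨q, hq⟩ := Finset.card_pos.1 hCP1
    have hqC : q ∈ C := (Finset.mem_sdiff.1 hq).1
    have hsc := hone p (hP1C hp) q hqC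
    obtain ⟨k, _, hk⟩ := hsc.exists_pow_eq'
    have hiter : ∀ k : ℕ, (π ^ k) p ∈ P1 := by
      intro k
      induction k with
      | zero => simpa using hp
      | succ k ih =>
        have : (π ^ (k+1)) p = π ((π ^ k) p) := by
          rw [pow_succ', Equiv.Perm.mul_apply]
        rw [this]
        exact hclosure _ ih
    have : q ∈ P1 := hk ▸ hiter k
    exact (Finset.mem_sdiff.1 hq).2 this
  · -- r1 = n : P2 = P4 = ∅, pair cannot escape
    have hr1e : r1 = n := by
      have : P1.card ≤ C.card := Finset.card_le_card hP1C
      omega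
    have hP1e : P1 = C := Finset.eq_of_subset_of_card_le hP1C (by omega)
    have hP2em : P2 = ∅ := by
      rw [← hP2e, hP1e, Finset.sdiff_self]
    have hP4em : P4 = ∅ := by
      rw [← hP4e, hP31, hP1e, Finset.sdiff_self]
    have hreach : ∀ v, Relation.ReflTransGen A (x i₀) v → v = x i₀ ∨ v = y (φ i₀) := by
      intro v h
      induction h with
      | refl => exact Or.inl rfl
      | tail hab hbc ih =>
        rename_i b c
        rcases ih with rfl | rfl
        · obtain ⟨m', rfl⟩ := st.arc_x hbc
          by_cases hm : m' = φ i₀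
          · exact Or.inr (by rw [hm])
          · exfalso
            set j := φ.symm m' with hj
            have hφj : φ j = m' := φ.apply_symm_apply m'
            have hji : j ≠ i₀ := by
              intro hh
              apply hm
              rw [← hφj, hh]
            have hjC : j ∈ C := Finset.mem_erase.2 ⟨hji, Finset.mem_univ _⟩
            have : j ∈ P2 := Finset.mem_filter.2 ⟨hjC, by rw [hφj]; exact hbc⟩
            rw [hP2em] at this
            exact absurd this (Finset.notMem_empty j)
        · obtain ⟨m', rfl⟩ := st.arc_y hbc
          by_cases hm : m' = i₀
          · exact Or.inl (by rw [hm])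
          · exfalso
            have hmC : m' ∈ C := Finset.mem_erase.2 ⟨hm, Finset.mem_univ _⟩
            have : m' ∈ P4 := Finset.mem_filter.2 ⟨hmC, hbc⟩
            rw [hP4em] at this
            exact absurd this (Finset.notMem_empty m')
    rcases hreach (x j₁) (st.hstrong _ _) with he | he
    · exact hj₁i (st.hx he)
    · exact st.hxy j₁ (φ i₀) he

end S15

namespace S15

open Equiv Equiv.Perm Finset

variable {V : Type*} [Fintype V] [DecidableEq V] {A : V → V → Prop} [DecidableRel A]
  {a : ℕ} {x y : Fin a → V}

theorem sealed_death (st : Setup A a x y) (φ : Equiv.Perm (Fin a)) (W : Finset (Fin a))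
    {w₀ w₁ : Fin a} (h0 : w₀ ∈ W) (h1 : w₁ ∉ W)
    (hX : ∀ i ∈ W, ∀ j, j ∉ W → ¬ A (x i) (y (φ j)))
    (hY : ∀ i ∈ W, ∀ j, j ∉ W → ¬ A (y (φ i)) (x j)) : False := by
  have hreach : ∀ v, Relation.ReflTransGen A (x w₀) v →
      (∃ i ∈ W, v = x i) ∨ (∃ i ∈ W, v = y (φ i)) := by
    intro v h
    induction h with
    | refl => exact Or.inl ⟨w₀, h0, rfl⟩
    | tail hab hbc ih =>
      rename_i b c
      rcases ih with ⟨i, hi, rfl⟩ | ⟨i, hi, rfl⟩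
      · obtain ⟨m', rfl⟩ := st.arc_x hbc
        set j := φ.symm m' with hj
        have hφj : φ j = m' := φ.apply_symm_apply m'
        by_cases hjW : j ∈ W
        · exact Or.inr ⟨j, hjW, by rw [hφj]⟩
        · exact absurd (by rw [hφj]; exact hbc) (hX i hi j hjW)
      · obtain ⟨m', rfl⟩ := st.arc_y hbc
        by_cases hmW : m' ∈ W
        · exact Or.inl ⟨m', hmW, rfl⟩
        · exact absurd hbc (hY i hi m' hmW)
  rcases hreach (x w₁) (st.hstrong _ _) with ⟨i, hi, he⟩ | ⟨i, hi, he⟩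
  · exact h1 (by rw [st.hx he]; exact hi)
  · exact st.hxy w₁ (φ i) he

theorem degseal (st : Setup A a x y) (φ : Equiv.Perm (Fin a)) (W : Finset (Fin a))
    (hW2 : 2 ≤ W.card)
    (hout : ∀ i ∈ W, ∀ j, j ∉ W → ¬ A (x i) (y (φ j)))
    (hin : ∀ i ∈ W, ∀ j, j ∉ W → ¬ A (y (φ j)) (x i))
    (hWa : 2 * W.card ≤ a) : False := by
  obtain ⟨i, hi, i', hi', hii⟩ := Finset.one_lt_card.1 hW2
  have hdeg : ∀ u ∈ W, deg A (x u) ≤ 2 * W.card := by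
    intro u hu
    have ho : outDeg A (x u) ≤ W.card := by
      rw [st.outDeg_x, card_filter_perm φ (fun m => A (x u) (y m))]
      apply Finset.card_le_card
      intro j hjf
      simp only [Finset.mem_filter, Finset.mem_univ, true_and] at hjf
      by_contra hjW
      exact hout u hu j hjW hjf
    have hi2 : inDeg A (x u) ≤ W.card := by
      rw [st.inDeg_x, card_filter_perm φ (fun m => A (y m) (x u))]
      apply Finset.card_le_card
      intro j hjf
      simp only [Finset.mem_filter, Finset.mem_univ, true_and] at hjf
      by_contra hjW
      exact hin u hu j hjW hjf
    unfold deg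
    omega
  have h1 := hdeg i hi
  have h2 := hdeg i' hi'
  have h3 := st.hdegX i i' hii
  have ha := st.ha
  omega

theorem caseA (st : Setup A a x y) {φ ψ : Equiv.Perm (Fin a)} (hv : Valid A x y φ ψ)
    (hmax : ∀ φ' ψ', Valid A x y φ' ψ' → Ncnt (ψ' * φ') ≤ Ncnt (ψ * φ))
    {i₀ j₀ : Fin a} (hns : ¬ (ψ * φ).SameCycle i₀ j₀)
    (hS2 : 2 ≤ (Finset.univ.filter ((ψ * φ).SameCycle i₀)).card)
    (hT2 : 2 ≤ (Finset.univ.filter ((ψ * φ).SameCycle j₀)).card) :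
    HasCycle A (2 * a) := by
  classical
  set π := ψ * φ with hπ
  set S := Finset.univ.filter (π.SameCycle i₀) with hS
  set T := Finset.univ.filter (π.SameCycle j₀) with hT
  have hmemS : i₀ ∈ S := by simp [hS, Equiv.Perm.SameCycle.refl]
  have hmemT : j₀ ∈ T := by simp [hT, Equiv.Perm.SameCycle.refl]
  have hdisj : Disjoint S T := by
    rw [Finset.disjoint_left]
    intro u huS huT
    rw [hS, Finset.mem_filter] at huS
    rw [hT, Finset.mem_filter] at huT
    exact hns (huS.2.trans huT.2.symm)
  have hsum : S.card + T.card ≤ a := by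
    calc S.card + T.card = (S ∪ T).card := (Finset.card_union_of_disjoint hdisj).symm
      _ ≤ (Finset.univ : Finset (Fin a)).card := Finset.card_le_card (Finset.subset_univ _)
      _ = a := by rw [Finset.card_univ, Fintype.card_fin]
  have has : a ≤ 2 * S.card := orbit_a_le st hv hmax i₀ hS2
  have hat : a ≤ 2 * T.card := orbit_a_le st hv hmax j₀ hT2
  have hst : S.card = T.card := by omega
  have haS : a = 2 * S.card := by omega
  have haT : a = 2 * T.card := by omega
  have hTc : T = Sᶜ := by
    apply Finset.eq_of_subset_of_card_le
    · intro u hu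
      rw [Finset.mem_compl]
      exact fun huS => Finset.disjoint_left.1 hdisj huS hu
    · have : S.card + Sᶜ.card = a := by
        have := Finset.card_add_card_compl S
        rwa [Fintype.card_fin] at this
      omega
  have hnotS : ∀ {u : Fin a}, u ∉ S → u ∈ T := by
    intro u hu
    rw [hTc, Finset.mem_compl]
    exact hu
  have hnotT : ∀ {u : Fin a}, u ∉ T → u ∈ S := by
    intro u hu
    by_contra hus
    exact hu (hnotS hus)
  have hj₀S : j₀ ∉ S := fun h => Finset.disjoint_left.1 hdisj h hmemT
  have hi₀T : i₀ ∉ T := fun h => Finset.disjoint_right.1 hdisj h hmemS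
  have hcS := orbit_complete st hv hmax i₀ hS2 haS
  have hcT := orbit_complete st hv hmax j₀ hT2 haT
  -- the image sets on the y side
  set U' := S.image φ with hU'
  have hU'card : U'.card = S.card := Finset.card_image_of_injective _ φ.injective
  have hmemU' : ∀ {m : Fin a}, m ∈ U' ↔ φ.symm m ∈ S := by
    intro m
    rw [hU', Finset.mem_image]
    constructor
    · rintro ⟨j, hj, rfl⟩
      rwa [Equiv.symm_apply_apply]
    · intro h
      exact ⟨φ.symm m, h, φ.apply_symm_apply m⟩
  -- complete blocks as needed by construct_cross
  have hcomp1 : ∀ i ∈ S, ∀ m ∈ U', A (x i) (y m) ∧ A (y m) (x i) := by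
    intro i hi m hm
    have := hcS i hi (φ.symm m) (hmemU'.1 hm)
    rwa [φ.apply_symm_apply] at this
  have hcomp2 : ∀ i, i ∉ S → ∀ m, m ∉ U' → A (x i) (y m) ∧ A (y m) (x i) := by
    intro i hi m hm
    have hiT : i ∈ T := hnotS hi
    have hmT : φ.symm m ∈ T := hnotS (fun h => hm (hmemU'.2 h))
    have := hcT i hiT (φ.symm m) hmT
    rwa [φ.apply_symm_apply] at this
  by_cases h12 : (∃ i ∈ S, ∃ j ∈ T, A (x i) (y (φ j))) ∧ (∃ j ∈ T, ∃ i ∈ S, A (x j) (y (φ i)))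
  · obtain ⟨⟨i1, hi1, j1, hj1, harc1⟩, ⟨j2, hj2, i2, hi2, harc2⟩⟩ := h12
    have hm1 : φ j1 ∉ U' := by
      rw [hmemU', Equiv.symm_apply_apply]
      exact fun h => Finset.disjoint_left.1 hdisj h hj1
    have hm2 : φ i2 ∈ U' := by
      rw [hmemU', Equiv.symm_apply_apply]
      exact hi2
    have hj2S : j2 ∉ S := fun h => Finset.disjoint_left.1 hdisj h hj2
    exact construct_cross st.hxy st.hx st.hy S U' hU'card.symm hcomp1 hcomp2
      hi1 hm1 harc1 hj2S hm2 harc2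
  by_cases h34 : (∃ i ∈ S, ∃ j ∈ T, A (y (φ i)) (x j)) ∧ (∃ j ∈ T, ∃ i ∈ S, A (y (φ j)) (x i))
  · obtain ⟨⟨i3, hi3, j3, hj3, harc3⟩, ⟨j4, hj4, i4, hi4, harc4⟩⟩ := h34
    have hxy' := st.hxy
    have hx' := st.hx
    have hy' := st.hy
    haveI instflip : DecidableRel (fun u v : V => A v u) :=
      fun u v => inferInstanceAs (Decidable (A v u))
    apply hasCycle_flip
    have hm1 : φ j4 ∉ U' := by
      rw [hmemU', Equiv.symm_apply_apply]
      exact fun h => Finset.disjoint_left.1 hdisj h hj4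
    have hm2 : φ i3 ∈ U' := by
      rw [hmemU', Equiv.symm_apply_apply]
      exact hi3
    have hj3S : j3 ∉ S := fun h => Finset.disjoint_left.1 hdisj h hj3
    exact @construct_cross V _ _ (fun u v => A v u) instflip a x y hxy' hx' hy' S U'
      hU'card.symm
      (fun i hi m hm => ⟨(hcomp1 i hi m hm).2, (hcomp1 i hi m hm).1⟩)
      (fun i hi m hm => ⟨(hcomp2 i hi m hm).2, (hcomp2 i hi m hm).1⟩)
      i4 (φ j4) j3 (φ i3) hi4 hm1 harc4 hj3S hm2 harc3
  -- death cases
  exfalso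
  rcases not_and_or.1 h12 with hn1 | hn2 <;> rcases not_and_or.1 h34 with hn3 | hn4
  · push_neg at hn1 hn3
    exact sealed_death st φ S hmemS hj₀S
      (fun i hi j hj => hn1 i hi j (hnotS hj))
      (fun i hi j hj => hn3 i hi j (hnotS hj))
  · push_neg at hn1 hn4
    exact degseal st φ S hS2
      (fun i hi j hj => hn1 i hi j (hnotS hj))
      (fun i hi j hj => hn4 j (hnotS hj) i hi)
      (by omega)
  · push_neg at hn2 hn3
    exact degseal st φ T hT2
      (fun i hi j hj => hn2 i hi j (hnotT hj))
      (fun i hi j hj => hn3 j (hnotT hj) i hi)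
      (by omega)
  · push_neg at hn2 hn4
    exact sealed_death st φ T hmemT hi₀T
      (fun i hi j hj => hn2 i hi j (hnotT hj))
      (fun i hi j hj => hn4 i hi j (hnotT hj))

end S15


open S15 Equiv Equiv.Perm Finset in
/-- Hamiltonicity (case k = a of the main theorem). -/
theorem stmt15 {V : Type*} [Fintype V] [DecidableEq V] (A : V → V → Prop) [DecidableRel A]
    (a : ℕ) (ha : 3 ≤ a) (X Y : Finset V)
    (hcard : Fintype.card V = 2 * a) (hX : X.card = a) (hY : Y.card = a)
    (hbip : BipartiteWith A X Y) (hstrong : StrongConn A)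
    (hdeg : ∀ u v : V, u ≠ v → ((u ∈ X ∧ v ∈ X) ∨ (u ∈ Y ∧ v ∈ Y)) →
      3 * a ≤ deg A u + deg A v) :
    HasCycle A (2 * a) := by
  classical
  -- enumerate X
  have hXcard : Fintype.card {v // v ∈ X} = a := by rw [Fintype.card_coe, hX]
  set eX := (Fintype.equivFinOfCardEq hXcard).symm with heX
  set x : Fin a → V := fun i => (eX i : V) with hx
  have hxinj : Function.Injective x := fun i j h => eX.injective (Subtype.ext h)
  have hxX : ∀ i, x i ∈ X := fun i => (eX i).2
  have hxsurj : ∀ v ∈ X, ∃ i, v = x i := by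
    intro v hv
    exact ⟨eX.symm ⟨v, hv⟩, by simp [hx]⟩
  -- get y by Hall
  obtain ⟨y, hyinj, hxyarc, hyY⟩ :=
    hall_match A ha X Y hcard hX hY hbip hstrong hdeg x hxinj hxX
  have hyim : Finset.univ.image y = Y := by
    apply Finset.eq_of_subset_of_card_le
    · intro v hv
      obtain ⟨m, _, rfl⟩ := Finset.mem_image.1 hv
      exact hyY m
    · rw [Finset.card_image_of_injective _ hyinj, Finset.card_univ, Fintype.card_fin, hY]
  have hysurj : ∀ v ∈ Y, ∃ m, v = y m := by
    intro v hv
    rw [← hyim] at hv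
    obtain ⟨m, _, rfl⟩ := Finset.mem_image.1 hv
    exact ⟨m, rfl⟩
  -- second Hall matching Y → X
  have hbipYX : BipartiteWith A Y X :=
    ⟨hbip.1.symm, by rw [Finset.union_comm]; exact hbip.2.1,
      fun u v h => (hbip.2.2 u v h).symm⟩
  have hdegYX : ∀ u v : V, u ≠ v → ((u ∈ Y ∧ v ∈ Y) ∨ (u ∈ X ∧ v ∈ X)) →
      3 * a ≤ deg A u + deg A v := fun u v hne hm => hdeg u v hne hm.symm
  obtain ⟨g, hginj, hyg, hgX⟩ :=
    hall_match A ha Y X hcard hY hX hbipYX hstrong hdegYX y hyinj hyY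
  have hchoice : ∀ j, ∃ i, g j = x i := fun j => hxsurj (g j) (hgX j)
  choose ρ0 hρ0 using hchoice
  have hρ0inj : Function.Injective ρ0 := by
    intro j j' h
    apply hginj
    rw [hρ0, hρ0, h]
  set ρ : Equiv.Perm (Fin a) :=
    Equiv.ofBijective ρ0 (Finite.injective_iff_bijective.1 hρ0inj) with hρ
  have hρap : ∀ j, ρ j = ρ0 j := fun j => rfl
  -- Setup
  have st : Setup A a x y :=
    { ha := ha
      hx := hxinj
      hy := hyinj
      hxy := fun i j h => Finset.disjoint_left.1 hbip.1 (hxX i) (h ▸ hyY j)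
      hcover := by
        intro v
        have hv : v ∈ X ∪ Y := by rw [hbip.2.1]; exact Finset.mem_univ v
        rcases Finset.mem_union.1 hv with hvX | hvY
        · exact Or.inl (hxsurj v hvX)
        · exact Or.inr (hysurj v hvY)
      harc := by
        intro u v h
        rcases hbip.2.2 u v h with ⟨huX, hvY⟩ | ⟨huY, hvX⟩
        · obtain ⟨i, rfl⟩ := hxsurj u huX
          obtain ⟨m, rfl⟩ := hysurj v hvY
          exact Or.inl ⟨i, m, rfl, rfl⟩
        · obtain ⟨m, rfl⟩ := hysurj u huY
          obtain ⟨i, rfl⟩ := hxsurj v hvX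
          exact Or.inr ⟨m, i, rfl, rfl⟩
      hstrong := hstrong
      hdegX := fun i j hne => hdeg (x i) (x j) (fun h => hne (hxinj h))
        (Or.inl ⟨hxX i, hxX j⟩)
      hdegY := fun i j hne => hdeg (y i) (y j) (fun h => hne (hyinj h))
        (Or.inr ⟨hyY i, hyY j⟩) }
  -- the set of valid pairs, pick a maximizer of Ncnt
  haveI hdecV : DecidablePred (fun p : Equiv.Perm (Fin a) × Equiv.Perm (Fin a) =>
      Valid A x y p.1 p.2) := fun p => by unfold Valid; infer_instance
  set Pr : Finset (Equiv.Perm (Fin a) × Equiv.Perm (Fin a)) :=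
    Finset.univ.filter (fun p => Valid A x y p.1 p.2) with hPr
  have hne : Pr.Nonempty := by
    refine ⟨(1, ρ), ?_⟩
    rw [hPr, Finset.mem_filter]
    refine ⟨Finset.mem_univ _, fun i => by simpa using hxyarc i, fun m => ?_⟩
    rw [hρap, ← hρ0]
    exact hyg m
  obtain ⟨pmax, hpmem, hpmax⟩ := Finset.exists_max_image Pr (fun p => Ncnt (p.2 * p.1)) hne
  set φ := pmax.1 with hφ
  set ψ := pmax.2 with hψ
  have hv : Valid A x y φ ψ := by
    have := (Finset.mem_filter.1 (hPr ▸ hpmem)).2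
    exact this
  have hmax : ∀ φ' ψ', Valid A x y φ' ψ' → Ncnt (ψ' * φ') ≤ Ncnt (ψ * φ) := by
    intro φ' ψ' hv'
    have hmem : (φ', ψ') ∈ Pr := by
      rw [hPr, Finset.mem_filter]
      exact ⟨Finset.mem_univ _, hv'⟩
    exact hpmax (φ', ψ') hmem
  set π := ψ * φ with hπ
  by_cases hall : ∀ u v : Fin a, π.SameCycle u v
  · -- single cycle: extract Hamiltonian cycle
    obtain ⟨F, hF, hFs⟩ := exists_cycle_enum π (by omega) hall
    apply hasCycle_of_seq st.hxy st.hx st.hy (by omega) F (fun k => φ (F k)) hF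
      (fun k k' h => hF (φ.injective h))
    · intro k
      exact hv.1 (F k)
    · intro k
      rw [hFs k]
      have : π (F k) = ψ (φ (F k)) := by rw [hπ, Equiv.Perm.mul_apply]
      rw [this]
      exact hv.2 (φ (F k))
  · push_neg at hall
    obtain ⟨u, v, huv⟩ := hall
    have hselfmem : ∀ w : Fin a, w ∈ Finset.univ.filter (π.SameCycle w) := by
      intro w
      simp [Equiv.Perm.SameCycle.refl]
    by_cases hA : ∃ p q : Fin a, ¬ π.SameCycle p q
        ∧ 2 ≤ (Finset.univ.filter (π.SameCycle p)).card
        ∧ 2 ≤ (Finset.univ.filter (π.SameCycle q)).card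
    · obtain ⟨p, q, h1, h2, h3⟩ := hA
      exact caseA st hv hmax h1 h2 h3
    · push_neg at hA
      have hsing : ∃ i₀ : Fin a, (Finset.univ.filter (π.SameCycle i₀)).card = 1 := by
        have h1 : 1 ≤ (Finset.univ.filter (π.SameCycle u)).card :=
          Finset.card_pos.2 ⟨u, hselfmem u⟩
        have h2 : 1 ≤ (Finset.univ.filter (π.SameCycle v)).card :=
          Finset.card_pos.2 ⟨v, hselfmem v⟩
        rcases Nat.lt_or_ge (Finset.univ.filter (π.SameCycle u)).card 2 with hu2 | hu2
        · exact ⟨u, by omega⟩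
        · have := hA u v huv hu2
          exact ⟨v, by omega⟩
      obtain ⟨i₀, hi₀⟩ := hsing
      have horb : Finset.univ.filter (π.SameCycle i₀) = {i₀} := by
        obtain ⟨b, hb⟩ := Finset.card_eq_one.1 hi₀
        have hmem := hselfmem i₀
        rw [hb] at hmem ⊢
        simp only [Finset.mem_singleton] at hmem
        rw [hmem]
      have h2sing : ∀ w, ¬ π.SameCycle i₀ w →
          (Finset.univ.filter (π.SameCycle w)).card = 1 → False := by
        intro w hw hw1
        have b1 := singleton_bound st hv hmax hi₀
        have b2 := singleton_bound st hv hmax hw1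
        have hne1 : i₀ ≠ w := fun h => hw (h ▸ Equiv.Perm.SameCycle.refl π i₀)
        have d1 := st.hdegX i₀ w hne1
        have d2 := st.hdegY (φ i₀) (φ w) (fun h => hne1 (φ.injective h))
        have := st.ha
        omega
      have hone : ∀ u' ∈ Finset.univ.erase i₀, ∀ v' ∈ Finset.univ.erase i₀,
          π.SameCycle u' v' := by
        intro u' hu' v' hv'
        by_contra hnuv
        have hnu : ¬ π.SameCycle i₀ u' := by
          intro h
          have : u' ∈ Finset.univ.filter (π.SameCycle i₀) := by simp [h]
          rw [horb] at this
          exact Finset.ne_of_mem_erase hu' (by simpa using this)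
        have hnv : ¬ π.SameCycle i₀ v' := by
          intro h
          have : v' ∈ Finset.univ.filter (π.SameCycle i₀) := by simp [h]
          rw [horb] at this
          exact Finset.ne_of_mem_erase hv' (by simpa using this)
        have hu2 : 2 ≤ (Finset.univ.filter (π.SameCycle u')).card := by
          have h1 : 1 ≤ (Finset.univ.filter (π.SameCycle u')).card :=
            Finset.card_pos.2 ⟨u', hselfmem u'⟩
          rcases Nat.lt_or_ge (Finset.univ.filter (π.SameCycle u')).card 2 with hc | hc
          · exact absurd (h2sing u' hnu (by omega)) id
          · exact hc
        have hv2 : 2 ≤ (Finset.univ.filter (π.SameCycle v')).card := by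
          have h1 : 1 ≤ (Finset.univ.filter (π.SameCycle v')).card :=
            Finset.card_pos.2 ⟨v', hselfmem v'⟩
          rcases Nat.lt_or_ge (Finset.univ.filter (π.SameCycle v')).card 2 with hc | hc
          · exact absurd (h2sing v' hnv (by omega)) id
          · exact hc
        have := hA u' v' hnuv hu2
        omega
      exact absurd (caseB st hv hmax hi₀ hone) id
end

section
/- Let D be a strongly connected balanced bipartite digraph of order 2a ≥ 6 with partite sets X and Y. Suppose there is a vertex x_1 ∈ X with out-degree 1, say with unique out-neighbor y_1, such that d(x_1) = a, and every other vertex x ∈ X \ {x_1} satisfies d(x) ≥ 2a. Then D contains cycles of every even length 2, 4, ..., 2a. -/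
open Finset

lemma cycle_of_seq {V : Type*} (A : V → V → Prop) (k : ℕ) (hk : 1 ≤ k)
    (xf yf : ℕ → V)
    (hxinj : ∀ i j, i < k → j < k → xf i = xf j → i = j)
    (hyinj : ∀ i j, i < k → j < k → yf i = yf j → i = j)
    (hxy : ∀ i j, i < k → j < k → xf i ≠ yf j)
    (hA1 : ∀ m, m < k → A (xf m) (yf m))
    (hA2 : ∀ m, m + 1 < k → A (yf m) (xf (m + 1)))
    (hA3 : A (yf (k - 1)) (xf 0)) : HasCycle A (2 * k) := by
  have hn : NeZero (2 * k) := ⟨by omega⟩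
  refine ⟨by omega, fun i => if i.val % 2 = 0 then xf (i.val / 2) else yf (i.val / 2), ?_, ?_⟩
  · intro i j hij
    have hi : i.val < 2 * k := ZMod.val_lt i
    have hj : j.val < 2 * k := ZMod.val_lt j
    have : i.val = j.val := by
      by_cases h1 : i.val % 2 = 0 <;> by_cases h2 : j.val % 2 = 0 <;>
        simp [h1, h2] at hij
      · have := hxinj _ _ (by omega) (by omega) hij; omega
      · exact absurd hij (hxy _ _ (by omega) (by omega))
      · exact absurd hij.symm (hxy _ _ (by omega) (by omega))
      · have := hyinj _ _ (by omega) (by omega) hij; omega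
    exact ZMod.val_injective _ this
  · intro i
    have hi : i.val < 2 * k := ZMod.val_lt i
    have hval1 : (1 : ZMod (2 * k)).val = 1 := by
      rw [ZMod.val_one_eq_one_mod, Nat.mod_eq_of_lt (by omega)]
    have hadd : (i + 1).val = (i.val + 1) % (2 * k) := by
      rw [ZMod.val_add, hval1]
    by_cases h1 : i.val % 2 = 0
    · have h2 : (i + 1).val = i.val + 1 := by rw [hadd, Nat.mod_eq_of_lt (by omega)]
      have h3 : (i + 1).val % 2 ≠ 0 := by omega
      simp only [h1, if_pos rfl, h3, if_neg h3]
      have : (i+1).val / 2 = i.val / 2 := by omega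
      rw [this]
      exact hA1 _ (by omega)
    · by_cases h4 : i.val = 2 * k - 1
      · have h2 : (i + 1).val = 0 := by
          have h5 : i.val + 1 = 2 * k := by omega
          rw [hadd, h5, Nat.mod_self]
        simp only [if_neg h1, h2]
        have : i.val / 2 = k - 1 := by omega
        simpa [this] using hA3
      · have h2 : (i + 1).val = i.val + 1 := by rw [hadd, Nat.mod_eq_of_lt (by omega)]
        have h3 : (i + 1).val % 2 = 0 := by omega
        simp only [if_neg h1, h3, if_pos rfl]
        have : (i+1).val / 2 = i.val / 2 + 1 := by omega
        rw [this]
        exact hA2 _ (by omega)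


/-- a vertex x₁ ∈ X with out-degree 1, degree a, all other
vertices of X of degree ≥ 2a — then D is even pancyclic. -/
theorem stmt16 {V : Type*} [Fintype V] [DecidableEq V] (A : V → V → Prop) [DecidableRel A]
    (a : ℕ) (ha : 3 ≤ a) (X Y : Finset V)
    (hcard : Fintype.card V = 2 * a) (hX : X.card = a) (hY : Y.card = a)
    (hbip : BipartiteWith A X Y) (hstrong : StrongConn A)
    (x1 y1 : V) (hx1 : x1 ∈ X) (hy1 : y1 ∈ Y)
    (hout : outDeg A x1 = 1) (harc : A x1 y1)
    (hdx1 : deg A x1 = a)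
    (hother : ∀ v ∈ X, v ≠ x1 → 2 * a ≤ deg A v) :
    ∀ k : ℕ, 1 ≤ k → k ≤ a → HasCycle A (2 * k) := by
  obtain ⟨hdisj, hunion, harcs⟩ := hbip
  have hnXY : ∀ v ∈ X, v ∉ Y := fun v hv => Finset.disjoint_left.mp hdisj hv
  have hcomp : ∀ x ∈ X, x ≠ x1 → ∀ y ∈ Y, A x y ∧ A y x := by
    intro x hx hxne y hy
    have hxY : x ∉ Y := hnXY x hx
    have hsub1 : (univ.filter fun v => A x v) ⊆ Y := by
      intro v hv
      rw [mem_filter] at hv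
      rcases harcs x v hv.2 with ⟨_, h⟩ | ⟨h, _⟩
      · exact h
      · exact absurd h hxY
    have hsub2 : (univ.filter fun v => A v x) ⊆ Y := by
      intro v hv
      rw [mem_filter] at hv
      rcases harcs v x hv.2 with ⟨h1, h2⟩ | ⟨h1, h2⟩
      · exact absurd h2 hxY
      · exact h1
    have hc1 : (univ.filter fun v => A x v).card ≤ a := hY ▸ Finset.card_le_card hsub1
    have hc2 : (univ.filter fun v => A v x).card ≤ a := hY ▸ Finset.card_le_card hsub2
    have hd := hother x hx hxne
    unfold deg outDeg inDeg at hd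
    have he1 : (univ.filter fun v => A x v) = Y :=
      Finset.eq_of_subset_of_card_le hsub1 (by omega)
    have he2 : (univ.filter fun v => A v x) = Y :=
      Finset.eq_of_subset_of_card_le hsub2 (by omega)
    constructor
    · have : y ∈ (univ.filter fun v => A x v) := he1 ▸ hy
      exact (mem_filter.mp this).2
    · have : y ∈ (univ.filter fun v => A v x) := he2 ▸ hy
      exact (mem_filter.mp this).2
  have hx1Y : x1 ∉ Y := hnXY x1 hx1
  have hinsub : (univ.filter fun v => A v x1) ⊆ Y := by
    intro v hv
    rw [mem_filter] at hv
    rcases harcs v x1 hv.2 with ⟨h1, h2⟩ | ⟨h1, h2⟩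
    · exact absurd h2 hx1Y
    · exact h1
  have hincard : (univ.filter fun v => A v x1).card = a - 1 := by
    unfold deg outDeg inDeg at hdx1
    unfold outDeg at hout
    omega
  have hlt : 1 < (univ.filter fun v => A v x1).card := by omega
  obtain ⟨y', hy'mem, hy'ne⟩ := Finset.exists_mem_ne hlt y1
  have hy'arc : A y' x1 := (mem_filter.mp hy'mem).2
  have hy'Y : y' ∈ Y := hinsub hy'mem
  set s : Finset V := X.erase x1 with hs_def
  have hscard : s.card = a - 1 := by rw [hs_def, Finset.card_erase_of_mem hx1, hX]
  set t : Finset V := (Y.erase y1).erase y' with ht_def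
  have htcard : t.card = a - 2 := by
    rw [ht_def, Finset.card_erase_of_mem (Finset.mem_erase.mpr ⟨hy'ne, hy'Y⟩),
      Finset.card_erase_of_mem hy1, hY]
    omega
  have hspos : 0 < s.card := by omega
  have htpos : 0 < t.card := by omega
  set u : ℕ → V := fun i => ((s.equivFin.symm ⟨i % s.card, Nat.mod_lt _ hspos⟩ : s) : V)
    with hu_def
  set w : ℕ → V := fun i => ((t.equivFin.symm ⟨i % t.card, Nat.mod_lt _ htpos⟩ : t) : V)
    with hw_def
  have hu_mem : ∀ i, u i ∈ s := fun i => Finset.coe_mem _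
  have hw_mem : ∀ i, w i ∈ t := fun i => Finset.coe_mem _
  have hu_inj : ∀ i j, i < a - 1 → j < a - 1 → u i = u j → i = j := by
    intro i j hi hj hij
    have h0 := s.equivFin.symm.injective (Subtype.coe_injective hij)
    have h2 := congrArg Fin.val h0
    simp only [hscard] at h2
    rwa [Nat.mod_eq_of_lt (by omega), Nat.mod_eq_of_lt (by omega)] at h2
  have hw_inj : ∀ i j, i < a - 2 → j < a - 2 → w i = w j → i = j := by
    intro i j hi hj hij
    have h0 := t.equivFin.symm.injective (Subtype.coe_injective hij)
    have h2 := congrArg Fin.val h0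
    simp only [htcard] at h2
    rwa [Nat.mod_eq_of_lt (by omega), Nat.mod_eq_of_lt (by omega)] at h2
  have hu_X : ∀ i, u i ∈ X := fun i => Finset.mem_of_mem_erase (hu_mem i)
  have hu_ne : ∀ i, u i ≠ x1 := fun i => (Finset.mem_erase.mp (hu_mem i)).1
  have hw_Y : ∀ i, w i ∈ Y :=
    fun i => Finset.mem_of_mem_erase (Finset.mem_of_mem_erase (hw_mem i))
  have hw_ne1 : ∀ i, w i ≠ y1 :=
    fun i => (Finset.mem_erase.mp (Finset.mem_of_mem_erase (hw_mem i))).1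
  have hw_ne' : ∀ i, w i ≠ y' := fun i => (Finset.mem_erase.mp (hw_mem i)).1
  intro k hk1 hka
  by_cases hk2 : k = 1
  · subst hk2
    have hne : u 0 ≠ y1 := fun h => hnXY _ (hu_X 0) (h ▸ hy1)
    refine cycle_of_seq A 1 le_rfl (fun _ => u 0) (fun _ => y1) ?_ ?_ ?_ ?_ ?_ ?_
    · omega
    · omega
    · intro i j _ _
      exact hne
    · intro m _
      exact (hcomp (u 0) (hu_X 0) (hu_ne 0) y1 hy1).1
    · omega
    · exact (hcomp (u 0) (hu_X 0) (hu_ne 0) y1 hy1).2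
  · -- k ≥ 2: cycle x1 → y1 → u0 → w0 → u1 → ⋯ → u(k-2) → y' → x1
    have hk0 : k - 1 ≠ 0 := by omega
    set xf : ℕ → V := fun i => if i = 0 then x1 else u (i - 1) with hxf_def
    set yf : ℕ → V := fun i => if i = 0 then y1 else if i = k - 1 then y' else w (i - 1)
      with hyf_def
    have hxfX : ∀ i, xf i ∈ X := by
      intro i; rw [hxf_def]; dsimp only
      split
      · exact hx1
      · exact hu_X _
    have hyfY : ∀ i, yf i ∈ Y := by
      intro i; rw [hyf_def]; dsimp only
      split
      · exact hy1
      · split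
        · exact hy'Y
        · exact hw_Y _
    refine cycle_of_seq A k hk1 xf yf ?_ ?_ ?_ ?_ ?_ ?_
    · intro i j hi hj hij
      rw [hxf_def] at hij; dsimp only at hij
      by_cases h1 : i = 0 <;> by_cases h2 : j = 0
      · omega
      · simp only [h1] at hij; simp only [if_pos, if_neg h2, reduceIte] at hij
        exact absurd hij.symm (hu_ne _)
      · simp only [h2] at hij; simp only [if_pos, if_neg h1, reduceIte] at hij
        exact absurd hij (hu_ne _)
      · simp only [if_neg h1, if_neg h2] at hij
        have := hu_inj _ _ (by omega) (by omega) hij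
        omega
    · intro i j hi hj hij
      rw [hyf_def] at hij; dsimp only at hij
      by_cases h1 : i = 0 <;> by_cases h2 : j = 0
      · omega
      · simp only [h1, reduceIte, if_neg h2] at hij
        by_cases h4 : j = k - 1
        · rw [if_pos h4] at hij
          exact absurd hij.symm hy'ne
        · rw [if_neg h4] at hij
          exact absurd hij.symm (hw_ne1 _)
      · simp only [h2, reduceIte, if_neg h1] at hij
        by_cases h3 : i = k - 1
        · rw [if_pos h3] at hij
          exact absurd hij hy'ne
        · rw [if_neg h3] at hij
          exact absurd hij (hw_ne1 _)
      · simp only [if_neg h1, if_neg h2] at hij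
        by_cases h3 : i = k - 1 <;> by_cases h4 : j = k - 1
        · omega
        · rw [if_pos h3, if_neg h4] at hij
          exact absurd hij.symm (hw_ne' _)
        · rw [if_neg h3, if_pos h4] at hij
          exact absurd hij (hw_ne' _)
        · rw [if_neg h3, if_neg h4] at hij
          have := hw_inj _ _ (by omega) (by omega) hij
          omega
    · intro i j _ _ h
      exact hnXY _ (hxfX i) (h ▸ hyfY j)
    · intro m hm
      by_cases h1 : m = 0
      · subst h1
        simpa [hxf_def, hyf_def] using harc
      · by_cases h2 : m = k - 1
        · have hx : xf m = u (m - 1) := by rw [hxf_def]; simp [h1]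
          have hy : yf m = y' := by rw [hyf_def]; simp [h1, h2, hk0]
          rw [hx, hy]
          exact (hcomp _ (hu_X _) (hu_ne _) y' hy'Y).1
        · have hx : xf m = u (m - 1) := by rw [hxf_def]; simp [h1]
          have hy : yf m = w (m - 1) := by rw [hyf_def]; simp [h1, h2]
          rw [hx, hy]
          exact (hcomp _ (hu_X _) (hu_ne _) _ (hw_Y _)).1
    · intro m hm
      have hx : xf (m + 1) = u m := by rw [hxf_def]; simp
      rw [hx]
      exact (hcomp _ (hu_X _) (hu_ne _) _ (hyfY m)).2
    · have h1 : yf (k - 1) = y' := by rw [hyf_def]; simp [hk0]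
      have h2 : xf 0 = x1 := by rw [hxf_def]; simp
      rw [h1, h2]
      exact hy'arc
end
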